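/- arXiv:0907.0162 — 8 statements merged into one kernel-verified Lean document; each statement's English description precedes it below -/
import Mathlib

section
/- Let a, b, Q be positive integers. There exists an index i such that consecutive denominators in the Farey sequence F_Q satisfy q_i = a and q_{i+1} = b if and only if 1 ≤ a, b ≤ Q, gcd(a,b) = 1, and a + b > Q. Moreover, when these conditions hold, the index i is uniquely determined. -/
open MeasureTheory

/-- The Farey fractions of order `Q`, as a set of rationals in `(0,1]`
with denominator at most `Q` (rationals are automatically in lowest terms). -/
def fareySet (Q : ℕ) : Set ℚ := {x | 0 < x ∧ x ≤ 1 ∧ x.den ≤ Q}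

/-- `IsFarey Q N p q` asserts that `i ↦ p i / q i` (for `1 ≤ i ≤ N`) enumerates the
Farey fractions of order `Q` in increasing order, in lowest terms, extended to all
integer indices by the periodicity `γ_{i+N} = γ_i + 1`. -/
structure IsFarey (Q N : ℕ) (p q : ℤ → ℤ) : Prop where
  qpos : ∀ i : ℤ, 0 < q i
  coprime : ∀ i : ℤ, Int.gcd (p i) (q i) = 1
  mono : ∀ i j : ℤ, i < j → (p i : ℚ) / (q i) < (p j : ℚ) / (q j)
  mem : ∀ i : ℤ, 1 ≤ i → i ≤ (N : ℤ) → ((p i : ℚ) / (q i)) ∈ fareySet Q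
  surj : ∀ x ∈ fareySet Q, ∃ i : ℤ, 1 ≤ i ∧ i ≤ (N : ℤ) ∧ (p i : ℚ) / (q i) = x
  period_p : ∀ i : ℤ, p (i + N) = p i + q i
  period_q : ∀ i : ℤ, q (i + N) = q i

/-- The `k`-index `ν_k(γ_i) = p_{i+k-1} q_{i-1} - p_{i-1} q_{i+k-1}`. -/
def nuk (p q : ℤ → ℤ) (k : ℕ) (i : ℤ) : ℤ :=
  p (i + k - 1) * q (i - 1) - p (i - 1) * q (i + k - 1)

lemma farey_gap {p1 q1 p2 q2 : ℤ} (h1 : 0 < q1) (h2 : 0 < q2)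
    (h : (p1 : ℚ) / q1 < (p2 : ℚ) / q2) :
    (1 : ℚ) / (q1 * q2) ≤ (p2 : ℚ) / q2 - (p1 : ℚ) / q1 := by
  have hq1 : (0:ℚ) < q1 := by exact_mod_cast h1
  have hq2 : (0:ℚ) < q2 := by exact_mod_cast h2
  rw [div_lt_div_iff₀ hq1 hq2] at h
  have hZ : p1 * q2 + 1 ≤ p2 * q1 := by exact_mod_cast h
  have hZ' : (p1 : ℚ) * q2 + 1 ≤ (p2:ℚ) * q1 := by exact_mod_cast hZ
  rw [div_sub_div _ _ hq2.ne' hq1.ne', div_le_div_iff₀ (by positivity) (by positivity)]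
  nlinarith [mul_pos hq1 hq2, mul_le_mul_of_nonneg_right hZ' (le_of_lt (mul_pos hq1 hq2))]

lemma Rat.den_sub_int (x : ℚ) (k : ℤ) : (x - k).den = x.den := by
  have hb : (0:ℤ) < (x.den:ℤ) := by exact_mod_cast x.pos
  have hco : IsCoprime x.num (x.den : ℤ) := by
    rw [Int.isCoprime_iff_gcd_eq_one]; exact x.reduced
  have hco2 : Nat.Coprime (x.num - k * x.den).natAbs (x.den:ℤ).natAbs := by
    have h2 : IsCoprime (x.num - k * x.den) (x.den:ℤ) := by
      simpa [sub_eq_add_neg, mul_comm] using hco.add_mul_right_left (-k)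
    rw [Int.isCoprime_iff_gcd_eq_one] at h2
    exact h2
  have hx : x - k = ((x.num - k * x.den : ℤ) : ℚ) / ((x.den : ℤ) : ℚ) := by
    push_cast
    rw [sub_div]
    rw [show (x.num : ℚ) / x.den = x from Rat.num_div_den x]
    field_simp
  have := Rat.den_div_eq_of_coprime hb hco2
  rw [← hx] at this
  exact_mod_cast this

lemma farey_repr (hF : IsFarey Q N p q) (i : ℤ) :
    ((p i : ℚ) / q i).num = p i ∧ (((p i : ℚ) / q i).den : ℤ) = q i :=
  ⟨Rat.num_div_eq_of_coprime (hF.qpos i) (hF.coprime i),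
   Rat.den_div_eq_of_coprime (hF.qpos i) (hF.coprime i)⟩

lemma farey_period_q (hF : IsFarey Q N p q) (i k : ℤ) : q (i + k * N) = q i := by
  induction k using Int.induction_on with
  | zero => simp
  | succ n ih =>
      have h := hF.period_q (i + (n : ℤ) * N)
      rw [show i + ((n : ℤ) + 1) * N = i + (n : ℤ) * N + N by ring]
      rw [h, ih]
  | pred n ih =>
      have h := hF.period_q (i + (-(n : ℤ) - 1) * N)
      rw [show i + (-(n:ℤ) - 1) * N + N = i + (-(n:ℤ)) * N by ring] at h
      rw [← h]; exact ih

lemma farey_period_p (hF : IsFarey Q N p q) (i k : ℤ) : p (i + k * N) = p i + k * q i := by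
  induction k using Int.induction_on with
  | zero => simp
  | succ n ih =>
      have h := hF.period_p (i + (n : ℤ) * N)
      rw [show i + ((n : ℤ) + 1) * N = i + (n : ℤ) * N + N by ring]
      rw [h, ih, farey_period_q hF]; ring
  | pred n ih =>
      have h := hF.period_p (i + (-(n : ℤ) - 1) * N)
      have hq := farey_period_q hF i (-(n:ℤ) - 1)
      rw [show i + (-(n:ℤ) - 1) * N + N = i + (-(n:ℤ)) * N by ring] at h
      linear_combination ih - h - hq

lemma farey_gamma_period (hF : IsFarey Q N p q) (i k : ℤ) :
    (p (i + k * N) : ℚ) / q (i + k * N) = (p i : ℚ) / q i + k := by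
  rw [farey_period_q hF, farey_period_p hF]
  have hq : ((q i : ℚ)) ≠ 0 := by
    have := hF.qpos i; positivity
  push_cast
  field_simp

lemma farey_N_pos (hF : IsFarey Q N p q) (hQ : 1 ≤ Q) : 0 < N := by
  have h1 : (1 : ℚ) ∈ fareySet Q := ⟨one_pos, le_refl _, by simpa using hQ⟩
  obtain ⟨i, hi1, hi2, -⟩ := hF.surj 1 h1
  omega

lemma farey_q_le (hF : IsFarey Q N p q) (hQ : 1 ≤ Q) (i : ℤ) : q i ≤ (Q : ℤ) := by
  have hN := farey_N_pos hF hQ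
  have hN' : (0:ℤ) < (N:ℤ) := by exact_mod_cast hN
  obtain ⟨i₀, k, hlow, hhigh, hieq⟩ : ∃ i₀ k : ℤ, 1 ≤ i₀ ∧ i₀ ≤ (N:ℤ) ∧ i = i₀ + k * N := by
    refine ⟨(i-1) % N + 1, (i-1) / N, ?_, ?_, ?_⟩
    · have := Int.emod_nonneg (i-1) hN'.ne'; omega
    · have := Int.emod_lt_of_pos (i-1) hN'; omega
    · have hdm := Int.mul_ediv_add_emod (i - 1) (N:ℤ)
      have hc : (i-1) / (N:ℤ) * N = N * ((i-1)/N) := mul_comm _ _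
      linarith
  have hmem := hF.mem i₀ hlow hhigh
  obtain ⟨-, -, hden⟩ := hmem
  have hrepr := (farey_repr hF i₀).2
  have : q i₀ ≤ (Q : ℤ) := by rw [← hrepr]; exact_mod_cast hden
  rw [hieq, farey_period_q hF]
  exact this

lemma farey_surj_all (hF : IsFarey Q N p q) (hQ : 1 ≤ Q) (x : ℚ) (hx : x.den ≤ Q) :
    ∃ i : ℤ, (p i : ℚ) / q i = x := by
  set k := ⌈x⌉ - 1 with hk
  have hc : (⌈x⌉ : ℚ) < x + 1 := Int.ceil_lt_add_one x
  have hc' : x ≤ (⌈x⌉ : ℚ) := Int.le_ceil x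
  have h1 : 0 < x - k := by rw [hk]; push_cast; linarith
  have h2 : x - k ≤ 1 := by rw [hk]; push_cast; linarith
  have hden : (x - k).den = x.den := Rat.den_sub_int x k
  obtain ⟨i, -, -, hi⟩ := hF.surj (x - k) ⟨h1, h2, by rw [hden]; exact hx⟩
  refine ⟨i + k * N, ?_⟩
  rw [farey_gamma_period hF, hi]; ring

lemma farey_between (hF : IsFarey Q N p q) (hQ : 1 ≤ Q) (i : ℤ) (x : ℚ) (hx : x.den ≤ Q)
    (hlt : (p i : ℚ) / q i < x) : (p (i+1) : ℚ) / q (i+1) ≤ x := by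
  obtain ⟨j, hj⟩ := farey_surj_all hF hQ x hx
  have hij : i < j := by
    by_contra hc
    push_neg at hc
    rcases lt_or_eq_of_le hc with h | h
    · exact absurd (hF.mono j i h) (by rw [hj]; linarith)
    · rw [h] at hj; rw [hj] at hlt; exact lt_irrefl _ hlt
  rcases lt_or_eq_of_le (by omega : i + 1 ≤ j) with h | h
  · exact le_of_lt (by rw [← hj]; exact hF.mono _ _ h)
  · rw [h, hj]


lemma farey_succ (hF : IsFarey Q N p q) (hQ : 1 ≤ Q) (i : ℤ) :
    p (i + 1) * q i - p i * q (i + 1) = 1 ∧ (Q : ℤ) < q i + q (i + 1) := by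
  have ha : 0 < q i := hF.qpos i
  have haQ : q i ≤ (Q : ℤ) := farey_q_le hF hQ i
  obtain ⟨u, v, huv⟩ := Int.isCoprime_iff_gcd_eq_one.mpr (hF.coprime i)
  -- huv : u * p i + v * q i = 1
  set t := ((Q : ℤ) + u) / q i with ht
  set y := -u + t * q i with hy
  set x := v + t * p i with hx
  have key1 : x * q i - y * p i = 1 := by rw [hx, hy]; linear_combination huv
  have hdm := Int.mul_ediv_add_emod ((Q : ℤ) + u) (q i)
  have h0 : 0 ≤ ((Q:ℤ) + u) % q i := Int.emod_nonneg _ ha.ne'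
  have h1 : ((Q:ℤ) + u) % q i < q i := Int.emod_lt_of_pos _ ha
  have hc : t * q i = q i * t := mul_comm _ _
  have hy1 : (Q : ℤ) - q i < y := by rw [hy]; rw [ht] at hc ⊢; linarith
  have hy2 : y ≤ (Q : ℤ) := by rw [hy]; rw [ht] at hc ⊢; linarith
  have hy0 : 0 < y := by linarith
  have hcoxy : Int.gcd x y = 1 :=
    Int.isCoprime_iff_gcd_eq_one.mp ⟨q i, -(p i), by linear_combination key1⟩
  have haQ' : (0:ℚ) < (q i : ℚ) := by exact_mod_cast ha
  have hyQ' : (0:ℚ) < (y : ℚ) := by exact_mod_cast hy0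
  have hlt : (p i : ℚ) / q i < (x : ℚ) / y := by
    rw [div_lt_div_iff₀ haQ' hyQ']
    have hz : p i * y < x * q i := by
      have h2 : p i * y + 1 = x * q i := by linear_combination -key1
      linarith
    exact_mod_cast hz
  have hdenxy : ((x : ℚ) / (y : ℚ)).den ≤ Q := by
    have hd := Rat.den_div_eq_of_coprime hy0 hcoxy
    have : (((x:ℚ)/(y:ℚ)).den : ℤ) ≤ (Q : ℤ) := by rw [hd]; exact hy2
    exact_mod_cast this
  have hle := farey_between hF hQ i ((x:ℚ)/(y:ℚ)) hdenxy hlt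
  have heq : (p (i+1) : ℚ) / q (i+1) = (x : ℚ) / y := by
    rcases lt_or_eq_of_le hle with hne | hE
    · exfalso
      have hs : 0 < q (i+1) := hF.qpos (i+1)
      have hsQ : q (i+1) ≤ (Q : ℤ) := farey_q_le hF hQ (i+1)
      have hsQ' : (0:ℚ) < (q (i+1) : ℚ) := by exact_mod_cast hs
      have g1 := farey_gap ha hs (hF.mono i (i+1) (lt_add_one i))
      have g2 := farey_gap hs hy0 hne
      have key1Q : (x:ℚ) * q i - (y:ℚ) * p i = 1 := by exact_mod_cast key1
      have total : (x : ℚ)/y - (p i : ℚ)/q i = 1 / ((y:ℚ) * q i) := by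
        rw [div_sub_div _ _ hyQ'.ne' haQ'.ne', key1Q]
      have hkey : 1/((q i:ℚ) * q (i+1)) + 1/((q (i+1):ℚ) * y) ≤ 1/((y:ℚ) * q i) := by
        linarith
      have e : ((q (i+1):ℚ) - y - q i)/((q i:ℚ) * q (i+1) * y) =
          1/((y:ℚ) * q i) - 1/((q i:ℚ) * q (i+1)) - 1/((q (i+1):ℚ) * y) := by
        field_simp
      have h3 : (0:ℚ) ≤ ((q (i+1):ℚ) - y - q i)/((q i:ℚ) * q (i+1) * y) := by
        rw [e]; linarith
      rw [le_div_iff₀ (by positivity)] at h3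
      have h4 : (y:ℚ) + q i ≤ (q (i+1):ℚ) := by linarith
      have h5 : y + q i ≤ q (i+1) := by exact_mod_cast h4
      linarith
    · exact hE
  obtain ⟨hp1, hq1⟩ := Rat.div_int_inj (hF.qpos (i+1)) hy0 (hF.coprime (i+1)) hcoxy heq
  constructor
  · rw [hp1, hq1]; linear_combination key1
  · rw [hq1]; linarith

lemma farey_p_bounds (hF : IsFarey Q N p q) (i : ℤ) (h1 : 1 ≤ i) (h2 : i ≤ (N:ℤ)) :
    1 ≤ p i ∧ p i ≤ q i := by
  obtain ⟨hpos, hle, -⟩ := hF.mem i h1 h2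
  have hq : (0:ℚ) < (q i : ℚ) := by exact_mod_cast hF.qpos i
  constructor
  · rw [lt_div_iff₀ hq] at hpos
    have : (0:ℚ) < (p i : ℚ) := by simpa using hpos
    exact_mod_cast this
  · rw [div_le_one hq] at hle
    exact_mod_cast hle

lemma farey_exists (hF : IsFarey Q N p q) (hQ : 1 ≤ Q) {a b : ℤ} (ha : 0 < a) (hb : 0 < b)
    (haQ : a ≤ (Q:ℤ)) (hbQ : b ≤ (Q:ℤ)) (hgcd : Int.gcd a b = 1) (hab : (Q:ℤ) < a + b) :
    ∃ i : ℤ, 1 ≤ i ∧ i ≤ (N : ℤ) ∧ q i = a ∧ q (i + 1) = b := by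
  obtain ⟨s, t, hst⟩ := Int.isCoprime_iff_gcd_eq_one.mpr hgcd
  -- hst : s * a + t * b = 1
  set K := (-t - 1) / a with hK
  set p₀ := (-t - 1) % a + 1 with hp₀
  set p' := s - K * b with hp'
  have hdm := Int.mul_ediv_add_emod (-t - 1) a
  have h0 : 0 ≤ (-t - 1) % a := Int.emod_nonneg _ ha.ne'
  have h1 : (-t - 1) % a < a := Int.emod_lt_of_pos _ ha
  have hp₀1 : 1 ≤ p₀ := by rw [hp₀]; omega
  have hp₀a : p₀ ≤ a := by rw [hp₀]; omega
  have hp₀eq : p₀ = -t - a * K := by rw [hp₀, hK]; linarith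
  have key : p' * a - p₀ * b = 1 := by rw [hp', hp₀eq]; linear_combination hst
  have hcop : Int.gcd p₀ a = 1 :=
    Int.isCoprime_iff_gcd_eq_one.mp ⟨-b, p', by linear_combination key⟩
  have haQ' : (0:ℚ) < (a : ℚ) := by exact_mod_cast ha
  have hmem : ((p₀ : ℚ) / (a : ℚ)) ∈ fareySet Q := by
    refine ⟨?_, ?_, ?_⟩
    · have : (0:ℚ) < (p₀:ℚ) := by exact_mod_cast hp₀1
      positivity
    · rw [div_le_one haQ']; exact_mod_cast hp₀a
    · have hd := Rat.den_div_eq_of_coprime ha hcop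
      have : (((p₀:ℚ)/(a:ℚ)).den : ℤ) ≤ (Q:ℤ) := by rw [hd]; exact haQ
      exact_mod_cast this
  obtain ⟨i, hi1, hi2, hi⟩ := hF.surj _ hmem
  obtain ⟨hpi, hqi⟩ := Rat.div_int_inj (hF.qpos i) ha (hF.coprime i) hcop hi
  obtain ⟨uni, bnd⟩ := farey_succ hF hQ i
  rw [hpi] at uni
  rw [hqi] at uni bnd
  -- uni : p (i+1) * a - p₀ * q (i+1) = 1
  have hsQ : q (i+1) ≤ (Q:ℤ) := farey_q_le hF hQ (i+1)
  have hdvd : a ∣ (q (i+1) - b) * p₀ := ⟨p (i+1) - p', by linear_combination key - uni⟩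
  have hdvd2 : a ∣ q (i+1) - b := by
    refine IsCoprime.dvd_of_dvd_mul_right ?_ hdvd
    exact Int.isCoprime_iff_gcd_eq_one.mpr (by rwa [Int.gcd_comm] at hcop)
  have hz : q (i+1) - b = 0 := by
    refine Int.eq_zero_of_abs_lt_dvd hdvd2 ?_
    rw [abs_lt]; omega
  exact ⟨i, hi1, hi2, hqi, by omega⟩

lemma farey_unique (hF : IsFarey Q N p q) (hQ : 1 ≤ Q) {a b : ℤ}
    (hgcd : Int.gcd a b = 1) (i j : ℤ)
    (hi : 1 ≤ i ∧ i ≤ (N:ℤ) ∧ q i = a ∧ q (i+1) = b)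
    (hj : 1 ≤ j ∧ j ≤ (N:ℤ) ∧ q j = a ∧ q (j+1) = b) : i = j := by
  obtain ⟨hi1, hi2, hia, hib⟩ := hi
  obtain ⟨hj1, hj2, hja, hjb⟩ := hj
  obtain ⟨unii, -⟩ := farey_succ hF hQ i
  obtain ⟨unij, -⟩ := farey_succ hF hQ j
  rw [hia, hib] at unii
  rw [hja, hjb] at unij
  have hdvd : a ∣ (p i - p j) * b := ⟨p (i+1) - p (j+1), by linear_combination unij - unii⟩
  have hdvd2 : a ∣ p i - p j :=
    IsCoprime.dvd_of_dvd_mul_right (Int.isCoprime_iff_gcd_eq_one.mpr hgcd) hdvd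
  obtain ⟨hpi1, hpi2⟩ := farey_p_bounds hF i hi1 hi2
  obtain ⟨hpj1, hpj2⟩ := farey_p_bounds hF j hj1 hj2
  rw [hia] at hpi2
  rw [hja] at hpj2
  have hz : p i - p j = 0 := by
    refine Int.eq_zero_of_abs_lt_dvd hdvd2 ?_
    rw [abs_lt]
    constructor <;> omega
  have hpij : p i = p j := by omega
  by_contra hne
  rcases lt_or_gt_of_ne hne with h | h
  · have := hF.mono i j h
    rw [hia, hja, hpij] at this
    exact lt_irrefl _ this
  · have := hF.mono j i h
    rw [hia, hja, hpij] at this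
    exact lt_irrefl _ this



/-- Consecutive denominators of `F_Q` are exactly the coprime pairs `(a,b)` with
`1 ≤ a, b ≤ Q` and `a + b > Q`, and the index at which a given pair occurs is unique. -/
theorem farey_consecutive_denominators (Q N : ℕ) (p q : ℤ → ℤ) (hQ : 1 ≤ Q)
    (hF : IsFarey Q N p q) (a b : ℤ) (ha : 0 < a) (hb : 0 < b) :
    ((∃ i : ℤ, 1 ≤ i ∧ i ≤ (N : ℤ) ∧ q i = a ∧ q (i + 1) = b) ↔
      (1 ≤ a ∧ a ≤ (Q : ℤ) ∧ 1 ≤ b ∧ b ≤ (Q : ℤ) ∧ Int.gcd a b = 1 ∧ (Q : ℤ) < a + b)) ∧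
    ((1 ≤ a ∧ a ≤ (Q : ℤ) ∧ 1 ≤ b ∧ b ≤ (Q : ℤ) ∧ Int.gcd a b = 1 ∧ (Q : ℤ) < a + b) →
      ∃! i : ℤ, 1 ≤ i ∧ i ≤ (N : ℤ) ∧ q i = a ∧ q (i + 1) = b) := by
  constructor
  · constructor
    · rintro ⟨i, hi1, hi2, hia, hib⟩
      obtain ⟨uni, bnd⟩ := farey_succ hF hQ i
      rw [hia, hib] at uni bnd
      refine ⟨ha, ?_, hb, ?_, ?_, bnd⟩
      · rw [← hia]; exact farey_q_le hF hQ i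
      · rw [← hib]; exact farey_q_le hF hQ (i+1)
      · exact Int.isCoprime_iff_gcd_eq_one.mp ⟨p (i+1), -(p i), by linear_combination uni⟩
    · rintro ⟨-, haQ, -, hbQ, hgcd, hab⟩
      exact farey_exists hF hQ ha hb haQ hbQ hgcd hab
  · rintro ⟨-, haQ, -, hbQ, hgcd, hab⟩
    obtain ⟨i, hi⟩ := farey_exists hF hQ ha hb haQ hbQ hgcd hab
    exact ⟨i, hi, fun j hj => farey_unique hF hQ hgcd j i hj hi⟩
end

section
/- For any fraction γ_i in the Farey sequence F_Q (with Q ≥ 2), the index satisfies ν_2(γ_i) = ⌊(Q + q_{i-1})/q_i⌋. -/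
open MeasureTheory

namespace FareyAux

variable {Q N : ℕ} {p q : ℤ → ℤ}

lemma cop (hF : IsFarey Q N p q) (i : ℤ) :
    Nat.Coprime (p i).natAbs (q i).natAbs := hF.coprime i

lemma num_eq (hF : IsFarey Q N p q) (i : ℤ) : ((p i : ℚ) / (q i)).num = p i :=
  Rat.num_div_eq_of_coprime (hF.qpos i) (cop hF i)

lemma den_eq (hF : IsFarey Q N p q) (i : ℤ) : (((p i : ℚ) / (q i)).den : ℤ) = q i :=
  Rat.den_div_eq_of_coprime (hF.qpos i) (cop hF i)

lemma q_le (hF : IsFarey Q N p q) {i : ℤ} (h1 : 1 ≤ i) (h2 : i ≤ (N : ℤ)) :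
    q i ≤ (Q : ℤ) := by
  have := (hF.mem i h1 h2).2.2
  have hd := den_eq hF i
  rw [← hd]; exact_mod_cast this


lemma gamma_pos (hF : IsFarey Q N p q) {i : ℤ} (h1 : 1 ≤ i) (h2 : i ≤ (N : ℤ)) :
    0 < p i := by
  have h := (hF.mem i h1 h2).1
  have hq : (0:ℚ) < (q i : ℚ) := by exact_mod_cast hF.qpos i
  have : (0:ℚ) < (p i : ℚ) := by
    by_contra hc
    push_neg at hc
    have : (p i : ℚ) / (q i) ≤ 0 := div_nonpos_of_nonpos_of_nonneg hc hq.le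
    linarith
  exact_mod_cast this

lemma lt_idx (hF : IsFarey Q N p q) {i j : ℤ}
    (h : (p i : ℚ) / (q i) < (p j : ℚ) / (q j)) : i < j := by
  by_contra hc
  push_neg at hc
  rcases lt_or_eq_of_le hc with hlt | rfl
  · exact absurd (hF.mono j i hlt) (by linarith)
  · exact lt_irrefl _ h

lemma no_between (hF : IsFarey Q N p q) {i : ℤ} (h1 : 1 ≤ i) (h2 : i ≤ (N : ℤ))
    {x : ℚ} (hx : x ∈ fareySet Q)
    (ha : (p i : ℚ) / (q i) < x) (hb : x < (p (i+1) : ℚ) / (q (i+1))) : False := by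
  obtain ⟨j, hj1, hj2, hjx⟩ := hF.surj x hx
  rw [← hjx] at ha hb
  have := lt_idx hF ha
  have := lt_idx hF hb
  omega

lemma N_pos (hF : IsFarey Q N p q) (hQ : 2 ≤ Q) : 1 ≤ N := by
  have h1 : (1:ℚ) ∈ fareySet Q := ⟨one_pos, le_refl _, by simp; omega⟩
  obtain ⟨j, hj1, hj2, _⟩ := hF.surj 1 h1
  omega

lemma gammaN (hF : IsFarey Q N p q) (hQ : 2 ≤ Q) : p N = 1 ∧ q N = 1 := by
  have hN := N_pos hF hQ
  have hN' : (1:ℤ) ≤ (N:ℤ) := by exact_mod_cast hN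
  have h1 : (1:ℚ) ∈ fareySet Q := ⟨one_pos, le_refl _, by simp; omega⟩
  obtain ⟨j, hj1, hj2, hjx⟩ := hF.surj 1 h1
  have hge : (1:ℚ) ≤ (p N : ℚ) / (q N) := by
    rcases lt_or_eq_of_le hj2 with hlt | rfl
    · exact le_of_lt (hjx ▸ hF.mono j N hlt)
    · exact le_of_eq hjx.symm
  have hle : (p N : ℚ) / (q N) ≤ 1 := (hF.mem N hN' le_rfl).2.1
  have heq : (p N : ℚ) / (q N) = ((1:ℤ):ℚ) / ((1:ℤ):ℚ) := by
    push_cast; rw [div_one]; linarith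
  have := Rat.div_int_inj (hF.qpos N) one_pos (cop hF N) (by norm_num) heq
  exact ⟨this.1, this.2⟩

lemma gamma1 (hF : IsFarey Q N p q) (hQ : 2 ≤ Q) : p 1 = 1 ∧ q 1 = (Q:ℤ) := by
  have hN := N_pos hF hQ
  have hN' : (1:ℤ) ≤ (N:ℤ) := by exact_mod_cast hN
  have hQ0 : (0:ℤ) < (Q:ℤ) := by exact_mod_cast (by omega : 0 < Q)
  have hQQ : (0:ℚ) < (Q:ℚ) := by exact_mod_cast hQ0
  have hmem : ((1:ℤ):ℚ) / ((Q:ℤ):ℚ) ∈ fareySet Q := by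
    refine ⟨by positivity, ?_, ?_⟩
    · rw [div_le_one (by push_cast; exact hQQ)]; push_cast; exact_mod_cast (by omega : (1:ℤ) ≤ (Q:ℤ))
    · have := Rat.den_div_eq_of_coprime (a := 1) (b := (Q:ℤ)) hQ0 (by simp [Nat.coprime_one_left])
      omega
  obtain ⟨j, hj1, hj2, hjx⟩ := hF.surj _ hmem
  -- show j = 1
  have hq1 : q 1 ≤ (Q:ℤ) := q_le hF le_rfl hN'
  have hp1 : 1 ≤ p 1 := gamma_pos hF le_rfl hN'
  have hq1p : (0:ℚ) < (q 1 : ℚ) := by exact_mod_cast hF.qpos 1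
  have hge : ((1:ℤ):ℚ) / ((Q:ℤ):ℚ) ≤ (p 1 : ℚ) / (q 1) := by
    rw [div_le_div_iff₀ (by push_cast; exact hQQ) hq1p]
    have : ((q 1 : ℚ)) ≤ ((Q:ℚ)) := by exact_mod_cast hq1
    have hp1' : (1:ℚ) ≤ (p 1 : ℚ) := by exact_mod_cast hp1
    push_cast
    nlinarith
  have hj : j = 1 := by
    by_contra hc
    have : 1 < j := by omega
    have := hF.mono 1 j this
    rw [hjx] at this
    linarith
  subst hj
  have := Rat.div_int_inj (hF.qpos 1) hQ0 (cop hF 1) (by simp [Nat.coprime_one_left]) hjx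
  exact ⟨this.1, this.2⟩


lemma detConsec (hF : IsFarey Q N p q) (hQ : 2 ≤ Q) {i : ℤ}
    (h1 : 1 ≤ i) (h2 : i + 1 ≤ (N : ℤ)) :
    q i * p (i+1) - p i * q (i+1) = 1 := by
  set a := p i with ha
  set b := q i with hb
  set u := p (i+1) with hu
  set v := q (i+1) with hv
  have hbp : 0 < b := hF.qpos i
  have hvp : 0 < v := hF.qpos (i+1)
  have hbQ : b ≤ (Q:ℤ) := q_le hF h1 (by omega)
  have hvQ : v ≤ (Q:ℤ) := q_le hF (by omega) h2
  have hbq : (0:ℚ) < (b:ℚ) := by exact_mod_cast hbp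
  have hvq : (0:ℚ) < (v:ℚ) := by exact_mod_cast hvp
  have hlt : (a:ℚ)/(b:ℚ) < (u:ℚ)/(v:ℚ) := hF.mono i (i+1) (by omega)
  have hdet1 : 1 ≤ b * u - a * v := by
    have := (div_lt_div_iff₀ hbq hvq).1 hlt
    have h' : a * v < u * b := by exact_mod_cast this
    have := Int.lt_iff_add_one_le.mp h'
    linarith
  -- Bezout
  obtain ⟨s, t, hst⟩ : ∃ s t : ℤ, a * s + b * t = 1 := by
    refine ⟨Int.gcdA a b, Int.gcdB a b, ?_⟩
    have := Int.gcd_eq_gcd_ab a b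
    rw [hF.coprime i] at this
    exact_mod_cast this.symm
  set x0 : ℤ := t with hx0
  set y0 : ℤ := -s with hy0
  have hb0 : b * x0 - a * y0 = 1 := by simp only [hx0, hy0]; linarith
  obtain ⟨y, x, hdet, hyQ1, hyQ2⟩ :
      ∃ y x : ℤ, b * x - a * y = 1 ∧ y ≤ (Q:ℤ) ∧ (Q:ℤ) - b < y := by
    refine ⟨y0 + b * (((Q:ℤ) - y0) / b), x0 + a * (((Q:ℤ) - y0) / b),
      by linear_combination hb0, ?_, ?_⟩
    · have hmod := Int.mul_ediv_add_emod ((Q:ℤ) - y0) b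
      have h0 := Int.emod_nonneg ((Q:ℤ) - y0) (by omega : b ≠ 0)
      linarith
    · have hmod := Int.mul_ediv_add_emod ((Q:ℤ) - y0) b
      have h1' := Int.emod_lt_of_pos ((Q:ℤ) - y0) hbp
      linarith
  have hyp : 0 < y := by omega
  have hyq : (0:ℚ) < (y:ℚ) := by exact_mod_cast hyp
  have hcop : Nat.Coprime x.natAbs y.natAbs := by
    have hg1 : (Int.gcd x y : ℤ) ∣ 1 := by
      have h1 : (Int.gcd x y : ℤ) ∣ x := Int.gcd_dvd_left x y
      have h2 : (Int.gcd x y : ℤ) ∣ y := Int.gcd_dvd_right x y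
      calc (Int.gcd x y : ℤ) ∣ b * x - a * y := dvd_sub (h1.mul_left b) (h2.mul_left a)
        _ = 1 := hdet
    have : Int.gcd x y = 1 := by
      have := Int.eq_one_of_dvd_one (by positivity) hg1
      exact_mod_cast this
    exact this
  have hax : (a:ℚ)/(b:ℚ) < (x:ℚ)/(y:ℚ) := by
    rw [div_lt_div_iff₀ hbq hyq]
    have : a * y < x * b := by nlinarith [hdet]
    exact_mod_cast this
  -- trichotomy
  rcases lt_trichotomy ((x:ℚ)/(y:ℚ)) ((u:ℚ)/(v:ℚ)) with hc | hc | hc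
  · exfalso
    have hmem : (x:ℚ)/(y:ℚ) ∈ fareySet Q := by
      refine ⟨?_, ?_, ?_⟩
      · have hg := (hF.mem i h1 (by omega)).1
        exact lt_trans hg hax
      · have hle := (hF.mem (i+1) (by omega) h2).2.1
        exact le_of_lt (lt_of_lt_of_le hc hle)
      · have := Rat.den_div_eq_of_coprime hyp hcop
        omega
    exact no_between hF h1 (by omega) hmem hax hc
  · obtain ⟨hux, hvy⟩ := Rat.div_int_inj hvp hyp (cop hF (i+1)) hcop hc.symm
    have e1 : u = x := hux
    have e2 : v = y := hvy
    rw [e1, e2]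
    linarith [hdet]
  · exfalso
    have hdet2 : 1 ≤ v * x - u * y := by
      have := (div_lt_div_iff₀ hvq hyq).1 hc
      have h' : u * y < x * v := by exact_mod_cast this
      have := Int.lt_iff_add_one_le.mp h'
      linarith
    have hvge : b + y ≤ v := by nlinarith [hdet, hdet1, hdet2, hbp, hyp]
    omega


lemma p0q0 (hF : IsFarey Q N p q) (hQ : 2 ≤ Q) : p 0 = 0 ∧ q 0 = 1 := by
  have hpp := hF.period_p 0
  have hqq := hF.period_q 0
  rw [zero_add] at hpp hqq
  have := gammaN hF hQ
  constructor <;> omega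

lemma detAll (hF : IsFarey Q N p q) (hQ : 2 ≤ Q) {i : ℤ}
    (h1 : 0 ≤ i) (h2 : i ≤ (N : ℤ)) :
    q i * p (i+1) - p i * q (i+1) = 1 := by
  rcases eq_or_lt_of_le h1 with rfl | hi0
  · obtain ⟨hp0, hq0⟩ := p0q0 hF hQ
    rw [hp0, hq0, zero_add]
    simp [(gamma1 hF hQ).1]
  rcases eq_or_lt_of_le h2 with rfl | hiN
  · have hpp := hF.period_p 1
    have hqq := hF.period_q 1
    rw [add_comm (1:ℤ) (N:ℤ)] at hpp hqq
    rw [hpp, hqq]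
    obtain ⟨hpN, hqN⟩ := gammaN hF hQ
    obtain ⟨hp1, hq1⟩ := gamma1 hF hQ
    rw [hpN, hqN, hp1, hq1]
    ring
  · exact detConsec hF hQ (by omega) (by omega)

lemma q_succ_le (hF : IsFarey Q N p q) (hQ : 2 ≤ Q) {i : ℤ}
    (h1 : 1 ≤ i) (h2 : i ≤ (N : ℤ)) : q (i+1) ≤ (Q:ℤ) := by
  rcases eq_or_lt_of_le h2 with rfl | hiN
  · have hqq := hF.period_q 1
    rw [add_comm (1:ℤ) (N:ℤ)] at hqq
    rw [hqq, (gamma1 hF hQ).2]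
  · exact q_le hF (by omega) (by omega)

lemma sum_gt (hF : IsFarey Q N p q) (hQ : 2 ≤ Q) {i : ℤ}
    (h1 : 1 ≤ i) (h2 : i ≤ (N : ℤ)) : (Q:ℤ) < q i + q (i+1) := by
  rcases eq_or_lt_of_le h2 with rfl | hiN
  · have hqq := hF.period_q 1
    rw [add_comm (1:ℤ) (N:ℤ)] at hqq
    rw [hqq, (gamma1 hF hQ).2, (gammaN hF hQ).2]
    omega
  -- interior: mediant argument
  by_contra hc
  push_neg at hc
  have hbp : 0 < q i := hF.qpos i
  have hvp : 0 < q (i+1) := hF.qpos (i+1)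
  have hbq : (0:ℚ) < (q i : ℚ) := by exact_mod_cast hbp
  have hvq : (0:ℚ) < (q (i+1) : ℚ) := by exact_mod_cast hvp
  have hmq : (0:ℚ) < ((q i + q (i+1) : ℤ) : ℚ) := by
    have : (0:ℤ) < q i + q (i+1) := by omega
    exact_mod_cast this
  have hlt : (p i : ℚ)/(q i) < (p (i+1) : ℚ)/(q (i+1)) := hF.mono i (i+1) (by omega)
  have hcross : (p i : ℚ) * (q (i+1) : ℚ) < (p (i+1) : ℚ) * (q i : ℚ) :=
    (div_lt_div_iff₀ hbq hvq).1 hlt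
  have hm1 : (p i : ℚ)/(q i) < ((p i + p (i+1) : ℤ):ℚ)/((q i + q (i+1) : ℤ):ℚ) := by
    rw [div_lt_div_iff₀ hbq hmq]
    push_cast
    nlinarith
  have hm2 : ((p i + p (i+1) : ℤ):ℚ)/((q i + q (i+1) : ℤ):ℚ) < (p (i+1) : ℚ)/(q (i+1)) := by
    rw [div_lt_div_iff₀ hmq hvq]
    push_cast
    nlinarith
  have hmem : ((p i + p (i+1) : ℤ):ℚ)/((q i + q (i+1) : ℤ):ℚ) ∈ fareySet Q := by
    refine ⟨?_, ?_, ?_⟩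
    · exact lt_trans (hF.mem i h1 (by omega)).1 hm1
    · exact le_of_lt (lt_of_lt_of_le hm2 (hF.mem (i+1) (by omega) (by omega)).2.1)
    · have hdvd : ((((p i + p (i+1) : ℤ):ℚ)/((q i + q (i+1) : ℤ):ℚ)).den : ℤ)
          ∣ (q i + q (i+1)) := by
        rw [← Rat.divInt_eq_div]
        exact Rat.den_dvd _ _
      have hle := Int.le_of_dvd (by omega) hdvd
      omega
  exact no_between hF h1 (by omega) hmem hm1 hm2

end FareyAux

open FareyAux in
theorem nu2_eq_floor' (Q N : ℕ) (p q : ℤ → ℤ) (hQ : 2 ≤ Q)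
    (hF : IsFarey Q N p q) (i : ℤ) (h1 : 1 ≤ i) (h2 : i ≤ (N : ℤ)) :
    p (i + 1) * q (i - 1) - p (i - 1) * q (i + 1) = ⌊(((Q : ℚ)) + (q (i - 1) : ℚ)) / (q i : ℚ)⌋ := by
  have det1 : q (i-1) * p i - p (i-1) * q i = 1 := by
    have := detAll hF hQ (i := i - 1) (by omega) (by omega)
    rw [sub_add_cancel] at this
    exact this
  have det2 : q i * p (i+1) - p i * q (i+1) = 1 := detAll hF hQ (by omega) h2
  have hf_le : q (i+1) ≤ (Q:ℤ) := q_succ_le hF hQ h1 h2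
  have hsum : (Q:ℤ) < q i + q (i+1) := sum_gt hF hQ h1 h2
  have hdp : 0 < q i := hF.qpos i
  have hdq : (0:ℚ) < (q i : ℚ) := by exact_mod_cast hdp
  have key : (p (i+1) * q (i-1) - p (i-1) * q (i+1)) * q i = q (i-1) + q (i+1) := by
    linear_combination q (i-1) * det2 + q (i+1) * det1
  symm
  rw [Int.floor_eq_iff]
  constructor
  · rw [le_div_iff₀ hdq]
    have : (p (i+1) * q (i-1) - p (i-1) * q (i+1)) * q i ≤ (Q:ℤ) + q (i-1) := by omega
    exact_mod_cast this
  · rw [div_lt_iff₀ hdq]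
    have : (Q:ℤ) + q (i-1) < (p (i+1) * q (i-1) - p (i-1) * q (i+1) + 1) * q i := by
      nlinarith [key, hsum]
    push_cast
    exact_mod_cast this


/-- The index satisfies `ν_2(γ_i) = ⌊(Q + q_{i-1}) / q_i⌋`. -/
theorem nu2_eq_floor (Q N : ℕ) (p q : ℤ → ℤ) (hQ : 2 ≤ Q)
    (hF : IsFarey Q N p q) (i : ℤ) (h1 : 1 ≤ i) (h2 : i ≤ (N : ℤ)) :
    nuk p q 2 i = ⌊(((Q : ℚ)) + (q (i - 1) : ℚ)) / (q i : ℚ)⌋ := by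
  have hidx : i + (2:ℕ) - 1 = i + 1 := by push_cast; ring
  unfold nuk
  rw [hidx]
  exact nu2_eq_floor' Q N p q hQ hF i h1 h2
end

section
/- For any Q ≥ 2, any fraction γ_i in F_Q, and any integer k ≥ 3, the matrix with rows (ν_{k-1}(γ_i), ν_k(γ_i)) and (ν_{k-2}(γ_{i+1}), ν_{k-1}(γ_{i+1})) has determinant 1; equivalently, ν_{k-1}(γ_i)·ν_{k-1}(γ_{i+1}) − ν_k(γ_i)·ν_{k-2}(γ_{i+1}) = 1. -/
open MeasureTheory

/-- Gap lemma: a fraction strictly between Farey neighbours has large denominator. -/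
lemma farey_gap_s4 {a b x y u v : ℤ} (hb : 0 < b) (hy : 0 < y) (hv : 0 < v)
    (key : b * x - a * y = 1) (h1 : (a : ℚ) / b < u / v) (h2 : (u : ℚ) / v < x / y) :
    b + y ≤ v := by
  have hb' : (0:ℚ) < b := by exact_mod_cast hb
  have hy' : (0:ℚ) < y := by exact_mod_cast hy
  have hv' : (0:ℚ) < v := by exact_mod_cast hv
  have H1 : (a:ℚ) * v < u * b := by
    rw [div_lt_div_iff₀ hb' hv'] at h1; linarith
  have H2 : (u:ℚ) * y < x * v := by
    rw [div_lt_div_iff₀ hv' hy'] at h2; linarith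
  have H1' : a * v + 1 ≤ u * b := by exact_mod_cast Int.add_one_le_of_lt (by exact_mod_cast H1)
  have H2' : u * y + 1 ≤ x * v := by exact_mod_cast Int.add_one_le_of_lt (by exact_mod_cast H2)
  nlinarith [mul_pos hy (sub_pos.mpr (lt_of_lt_of_le (by linarith : a*v < a*v+1) H1'))]

lemma num_den_eq {a b : ℤ} (hb : 0 < b) (h : Int.gcd a b = 1) :
    ((a : ℚ) / b).num = a ∧ (((a : ℚ) / b).den : ℤ) = b :=
  ⟨Rat.num_div_eq_of_coprime hb h, Rat.den_div_eq_of_coprime hb h⟩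


lemma int_pos_of_div_pos {a b : ℤ} (hb : 0 < b) (h : 0 < (a : ℚ) / b) : 0 < a := by
  have hb' : (0:ℚ) < b := by exact_mod_cast hb
  have := (div_pos_iff.mp h)
  rcases this with ⟨h1, _⟩ | ⟨_, h2⟩
  · exact_mod_cast h1
  · linarith

/-- consecutive Farey neighbours (core case `1 ≤ j ≤ N - 1`). -/
lemma farey_neighbor_core (Q N : ℕ) (p q : ℤ → ℤ) (hQ : 2 ≤ Q)
    (hF : IsFarey Q N p q) (j : ℤ) (hj1 : 1 ≤ j) (hj2 : j + 1 ≤ (N : ℤ)) :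
    p (j + 1) * q j - p j * q (j + 1) = 1 := by
  obtain ⟨qpos, coprime, mono, mem, surj, _, _⟩ := hF
  have hb : 0 < q j := qpos j
  have hab : Int.gcd (p j) (q j) = 1 := coprime j
  have hd : 0 < q (j + 1) := qpos (j + 1)
  have hcd : Int.gcd (p (j + 1)) (q (j + 1)) = 1 := coprime (j + 1)
  obtain ⟨hpos, hle1, hden⟩ := mem j hj1 (by omega)
  have hbQ : q j ≤ (Q : ℤ) := by
    have h2 := (num_den_eq hb hab).2
    have : ((↑(p j) / ↑(q j) : ℚ).den : ℤ) ≤ (Q : ℤ) := by exact_mod_cast hden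
    omega
  have hapos : 0 < p j := int_pos_of_div_pos hb hpos
  -- strict bound γ_j < 1
  have hlt1 : (↑(p j) / ↑(q j) : ℚ) < 1 := by
    rcases lt_or_eq_of_le (show j ≤ (N:ℤ) by omega) with hjN | hjN
    · have hm := mono j N hjN
      have := (mem N (by omega) le_rfl).2.1
      linarith
    · omega
  -- Bezout: find x0 y0 with q j * x0 - p j * y0 = 1
  have hbez : ∃ x0 y0 : ℤ, q j * x0 - p j * y0 = 1 := by
    have h := Int.gcd_eq_gcd_ab (p j) (q j)
    rw [hab] at h
    exact ⟨Int.gcdB (p j) (q j), -Int.gcdA (p j) (q j), by push_cast at h; linarith⟩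
  obtain ⟨x0, y0, hbez⟩ := hbez
  -- shift to make the denominator land in (Q - q j, Q]
  set t : ℤ := ((Q : ℤ) - y0) / (q j) with ht
  set r : ℤ := ((Q : ℤ) - y0) % (q j) with hr
  have hdm : q j * t + r = (Q : ℤ) - y0 := Int.mul_ediv_add_emod _ _
  have hr0 : 0 ≤ r := Int.emod_nonneg _ (by omega)
  have hrb : r < q j := Int.emod_lt_of_pos _ hb
  set y : ℤ := y0 + q j * t with hy
  set x : ℤ := x0 + p j * t with hx
  have key : q j * x - p j * y = 1 := by
    rw [hx, hy]; ring_nf; ring_nf at hbez; linarith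
  have hyQ : y ≤ (Q : ℤ) := by omega
  have hyQb : (Q : ℤ) < y + q j := by omega
  have hy0 : 0 < y := by omega
  have hx0 : 0 < x := by nlinarith
  have hy' : (0:ℚ) < (y : ℚ) := by exact_mod_cast hy0
  have hb' : (0:ℚ) < (q j : ℚ) := by exact_mod_cast hb
  have hlt : (↑(p j) / ↑(q j) : ℚ) < (x : ℚ) / y := by
    rw [div_lt_div_iff₀ hb' hy']
    have : (p j) * y < x * q j := by nlinarith
    exact_mod_cast this
  -- x ≤ y
  have hxy : x ≤ y := by
    by_contra hcon
    push_neg at hcon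
    have h2 : (1:ℚ) < (x:ℚ)/y := by
      rw [lt_div_iff₀ hy']; exact_mod_cast (by linarith : (1:ℤ) * y < x)
    have h1 : (↑(p j) / ↑(q j) : ℚ) < (1:ℚ)/1 := by simpa using hlt1
    have := farey_gap_s4 (u := 1) hb hy0 (by norm_num : (0:ℤ) < 1) key (by simpa using h1) (by simpa using h2)
    omega
  -- x / y is a Farey fraction
  have hxygcd : Int.gcd x y = 1 := by
    have hdvd : (Int.gcd x y : ℤ) ∣ 1 := by
      have h1 : (Int.gcd x y : ℤ) ∣ x := Int.gcd_dvd_left x y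
      have h2 : (Int.gcd x y : ℤ) ∣ y := Int.gcd_dvd_right x y
      calc (Int.gcd x y : ℤ) ∣ q j * x - p j * y := dvd_sub (h1.mul_left _) (h2.mul_left _)
        _ = 1 := key
    exact_mod_cast Int.eq_one_of_dvd_one (by positivity) hdvd
  have hmemxy : ((x:ℚ)/y) ∈ fareySet Q := by
    refine ⟨by positivity, ?_, ?_⟩
    · rw [div_le_one hy']; exact_mod_cast hxy
    · have := (num_den_eq hy0 hxygcd).2
      have hyQ' : (y:ℤ) ≤ (Q:ℤ) := hyQ
      omega
  obtain ⟨m, hm1, hm2, hmval⟩ := surj _ hmemxy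
  -- j < m
  have hjm : j < m := by
    by_contra hcon
    push_neg at hcon
    rcases lt_or_eq_of_le hcon with h | h
    · have := mono m j h; rw [hmval] at this; linarith
    · rw [h] at hmval; linarith [hlt, hmval.ge, hmval.le]
  -- m = j + 1
  have hmeq : m = j + 1 := by
    by_contra hcon
    have hlt2 : j + 1 < m := by omega
    have hA := mono j (j+1) (by omega)
    have hB := mono (j+1) m hlt2
    rw [hmval] at hB
    obtain ⟨_, _, hdenm⟩ := mem (j+1) (by omega) (by omega)
    have hdQ : q (j+1) ≤ (Q : ℤ) := by
      have h2 := (num_den_eq hd hcd).2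
      have : ((↑(p (j+1)) / ↑(q (j+1)) : ℚ).den : ℤ) ≤ (Q : ℤ) := by exact_mod_cast hdenm
      omega
    have := farey_gap_s4 hb hy0 hd key hA hB
    omega
  rw [hmeq] at hmval
  -- conclude p (j+1) = x, q (j+1) = y
  obtain ⟨hpe, hqe⟩ := Rat.div_int_inj hd hy0 hcd hxygcd hmval
  rw [hpe, hqe]
  linarith [key]

/-- the neighbour determinant is 1 for all integer indices. -/
lemma farey_neighbor (Q N : ℕ) (p q : ℤ → ℤ) (hQ : 2 ≤ Q)
    (hF : IsFarey Q N p q) (j : ℤ) :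
    p (j + 1) * q j - p j * q (j + 1) = 1 := by
  have qpos := hF.qpos
  have hN : 0 < N := by
    by_contra h
    have h0 : (N : ℤ) = 0 := by omega
    have := hF.period_p 0
    rw [h0, add_zero] at this
    have := qpos 0
    omega
  -- endpoint values: p 1 = 1, p N = q N = 1
  have hmem1Q : ((1:ℚ)/Q) ∈ fareySet Q := by
    have hQ' : (0:ℚ) < (Q:ℚ) := by positivity
    refine ⟨by positivity, ?_, ?_⟩
    · rw [div_le_one hQ']; exact_mod_cast (show (1:ℕ) ≤ Q by omega)
    · have := (num_den_eq (by exact_mod_cast (by omega : 0 < Q) : (0:ℤ) < (Q:ℤ))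
        (by simp [Int.gcd] : Int.gcd (1:ℤ) (Q:ℤ) = 1)).2
      push_cast at this ⊢
      omega
  have hp1 : p 1 = 1 := by
    obtain ⟨m, hm1, hm2, hmval⟩ := hF.surj _ hmem1Q
    have hle : (p 1 : ℚ)/(q 1) ≤ (1:ℚ)/Q := by
      rcases lt_or_eq_of_le hm1 with h | h
      · have := hF.mono 1 m h; rw [hmval] at this; linarith
      · rw [← h] at hmval; exact hmval.le
    have hge : (1:ℚ)/Q ≤ (p 1 : ℚ)/(q 1) := by
      obtain ⟨hpos1, _, hden1⟩ := hF.mem 1 le_rfl (by omega)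
      have hb1 : 0 < q 1 := qpos 1
      have hb1' : (0:ℚ) < (q 1 : ℚ) := by exact_mod_cast hb1
      have hQ' : (0:ℚ) < (Q:ℚ) := by positivity
      have hq1Q : q 1 ≤ (Q:ℤ) := by
        have h2 := (num_den_eq hb1 (hF.coprime 1)).2
        have : ((↑(p 1) / ↑(q 1) : ℚ).den : ℤ) ≤ (Q : ℤ) := by exact_mod_cast hden1
        omega
      have hp1pos : 0 < p 1 := int_pos_of_div_pos hb1 hpos1
      rw [div_le_div_iff₀ hQ' hb1']
      have : 1 * q 1 ≤ p 1 * Q := by nlinarith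
      exact_mod_cast this
    have heq : (p 1 : ℚ)/(q 1) = (1:ℚ)/Q := le_antisymm hle hge
    exact (Rat.div_int_inj (qpos 1) (by exact_mod_cast (by omega : 0 < Q)) (hF.coprime 1)
      (by simp [Int.gcd]) heq).1
  have hpN : p N = 1 ∧ q N = 1 := by
    have hmem1 : (1:ℚ) ∈ fareySet Q := ⟨by norm_num, le_rfl, by norm_num; omega⟩
    obtain ⟨m, hm1, hm2, hmval⟩ := hF.surj _ hmem1
    have heq : (p N : ℚ)/(q N) = 1 := by
      have hleN : (p N : ℚ)/(q N) ≤ 1 := (hF.mem N (by omega) le_rfl).2.1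
      rcases lt_or_eq_of_le hm2 with h | h
      · have := hF.mono m N h; rw [hmval] at this; linarith
      · rw [h] at hmval; exact hmval
    have := Rat.div_int_inj (c := 1) (qpos N) (by norm_num : (0:ℤ) < 1) (hF.coprime N)
      (by simp [Int.gcd]) (by simpa using heq)
    exact ⟨this.1, this.2⟩
  -- determinant over one full period, indices 1..N
  have hwin : ∀ j : ℤ, 1 ≤ j → j ≤ (N : ℤ) → p (j + 1) * q j - p j * q (j + 1) = 1 := by
    intro j hj1 hj2
    rcases lt_or_eq_of_le hj2 with h | h
    · exact farey_neighbor_core Q N p q hQ hF j hj1 (by omega)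
    · subst h
      have e1 : p ((N:ℤ) + 1) = p 1 + q 1 := by
        have := hF.period_p 1; rw [add_comm] at this; exact this
      have e2 : q ((N:ℤ) + 1) = q 1 := by
        have := hF.period_q 1; rw [add_comm] at this; exact this
      rw [e1, e2, hpN.1, hpN.2, hp1]; ring
  -- extend by periodicity: p(j + tN) = p j + t * q j, q(j + tN) = q j
  have hper : ∀ t : ℤ, ∀ j : ℤ, p (j + t * N) = p j + t * q j ∧ q (j + t * N) = q j := by
    intro t
    induction t using Int.induction_on with
    | zero => intro j; simp
    | succ n ih =>
      intro j
      have e : j + ((n:ℤ) + 1) * N = (j + n * N) + N := by ring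
      rw [e, hF.period_p, hF.period_q, (ih j).1, (ih j).2]
      constructor <;> ring
    | pred n ih =>
      intro j
      have e : j + (-(n:ℤ) - 1) * N + N = j + (-(n:ℤ)) * N := by ring
      have h1 := hF.period_p (j + (-(n:ℤ) - 1) * N)
      have h2 := hF.period_q (j + (-(n:ℤ) - 1) * N)
      rw [e] at h1 h2
      have i1 := (ih j).1
      have i2 := (ih j).2
      have hq' : q (j + (-(n:ℤ) - 1) * N) = q j := by omega
      rw [hq'] at h1
      exact ⟨by linear_combination i1 - h1, hq'⟩
  -- reduce arbitrary j into [1, N]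
  set t : ℤ := (j - 1) / N with ht
  set j0 : ℤ := (j - 1) % N + 1 with hj0
  have hdm : (N:ℤ) * t + (j0 - 1) = j - 1 := by
    rw [ht, hj0]; linear_combination Int.mul_ediv_add_emod (j - 1) (N:ℤ)
  have hj01 : 1 ≤ j0 := by
    rw [hj0]; have := Int.emod_nonneg (j - 1) (show (N:ℤ) ≠ 0 by omega); linarith
  have hj02 : j0 ≤ (N:ℤ) := by
    rw [hj0]; have := Int.emod_lt_of_pos (j - 1) (show (0:ℤ) < N by omega); linarith
  have hje : j = j0 + t * N := by linear_combination -hdm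
  have hje1 : j + 1 = (j0 + 1) + t * N := by linear_combination -hdm
  rw [hje1, hje, (hper t (j0+1)).1, (hper t (j0+1)).2, (hper t j0).1, (hper t j0).2]
  have := hwin j0 hj01 hj02
  ring_nf
  ring_nf at this
  linarith

/-- For `k ≥ 3`, `ν_{k-1}(γ_i) ν_{k-1}(γ_{i+1}) - ν_k(γ_i) ν_{k-2}(γ_{i+1}) = 1`;
i.e. the matrix with rows `(ν_{k-1}(γ_i), ν_k(γ_i))`, `(ν_{k-2}(γ_{i+1}), ν_{k-1}(γ_{i+1}))`
has determinant one. -/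
theorem nuk_det_identity (Q N : ℕ) (p q : ℤ → ℤ) (hQ : 2 ≤ Q)
    (hF : IsFarey Q N p q) (i : ℤ) (h1 : 1 ≤ i) (h2 : i ≤ (N : ℤ))
    (k : ℕ) (hk : 3 ≤ k) :
    nuk p q (k - 1) i * nuk p q (k - 1) (i + 1)
      - nuk p q k i * nuk p q (k - 2) (i + 1) = 1 := by
  obtain ⟨m, rfl⟩ : ∃ m, k = m + 3 := ⟨k - 3, by omega⟩
  have hAB := farey_neighbor Q N p q hQ hF (i - 1)
  have hCD := farey_neighbor Q N p q hQ hF (i + m + 1)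
  rw [show i - 1 + 1 = i by ring] at hAB
  rw [show i + (m:ℤ) + 1 + 1 = i + m + 2 by ring] at hCD
  show nuk p q (m+2) i * nuk p q (m+2) (i+1) - nuk p q (m+3) i * nuk p q (m+1) (i+1) = 1
  simp only [nuk]
  push_cast
  rw [show i + ((m:ℤ) + 2) - 1 = i + m + 1 by ring,
      show i + 1 + ((m:ℤ) + 2) - 1 = i + m + 2 by ring,
      show i + ((m:ℤ) + 3) - 1 = i + m + 2 by ring,
      show i + 1 + ((m:ℤ) + 1) - 1 = i + m + 1 by ring,
      show i + 1 - 1 = i by ring]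
  linear_combination (p (i + (m:ℤ) + 2) * q (i + m + 1) - p (i + m + 1) * q (i + m + 2)) * hAB + hCD
end

section
/- For any Q ≥ 2, any fraction γ_i in F_Q, and any integer k ≥ 3, the recurrence ν_k(γ_i) = ν_2(γ_{i+k-2})·ν_{k-1}(γ_i) − ν_{k-2}(γ_i) holds. -/
open MeasureTheory

/-- A reduced fraction `x/y` with `0 < x ≤ y ≤ Q` is a Farey fraction of order `Q`. -/
lemma farey_mem' {Q : ℕ} {x y : ℤ} (hx : 0 < x) (hxy : x ≤ y)
    (hc : Int.gcd x y = 1) (hyQ : y ≤ (Q:ℤ)) : ((x:ℚ)/(y:ℚ)) ∈ fareySet Q := by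
  have hy : 0 < y := lt_of_lt_of_le hx hxy
  have hden := Rat.den_div_eq_of_coprime hy hc
  refine ⟨by positivity, ?_, by omega⟩
  rw [div_le_one (by exact_mod_cast hy)]
  exact_mod_cast hxy

/-- The index order reflects the value order. -/
lemma farey_idx_lt {Q N : ℕ} {p q : ℤ → ℤ} (hF : IsFarey Q N p q) {m n : ℤ}
    (h : (p m : ℚ) / (q m) < (p n : ℚ) / (q n)) : m < n := by
  rcases lt_trichotomy m n with h1 | h1 | h1
  · exact h1
  · subst h1; exact absurd h (lt_irrefl _)
  · exact absurd (hF.mono n m h1) (not_lt.mpr h.le)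

/-- Basic bounds for an index in `[1, N]`. -/
lemma farey_bounds {Q N : ℕ} {p q : ℤ → ℤ} (hF : IsFarey Q N p q) {i : ℤ}
    (h1 : 1 ≤ i) (h2 : i ≤ (N:ℤ)) : 0 < p i ∧ p i ≤ q i ∧ q i ≤ (Q:ℤ) := by
  obtain ⟨hpos, hle, hden⟩ := hF.mem i h1 h2
  have hq := hF.qpos i
  have hqQ : (q i : ℚ) > 0 := by exact_mod_cast hq
  have hp : 0 < p i := by
    by_contra hp
    push_neg at hp
    have hple : (p i : ℚ) ≤ 0 := by exact_mod_cast hp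
    have : (p i : ℚ) / q i ≤ 0 := div_nonpos_of_nonpos_of_nonneg hple hqQ.le
    exact absurd hpos (not_lt.mpr this)
  have hpq : p i ≤ q i := by
    have := (div_le_one hqQ).mp hle
    exact_mod_cast this
  have hdq := Rat.den_div_eq_of_coprime hq (hF.coprime i)
  exact ⟨hp, hpq, by omega⟩

/-- The last Farey fraction is `1/1`. -/
lemma farey_last {Q N : ℕ} {p q : ℤ → ℤ} (hQ : 2 ≤ Q) (hF : IsFarey Q N p q)
    (hN : 1 ≤ (N:ℤ)) : p N = 1 ∧ q N = 1 := by
  have h1 : (1:ℚ) ∈ fareySet Q := ⟨one_pos, le_refl _, by simp; omega⟩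
  obtain ⟨m, hm1, hm2, hm⟩ := hF.surj 1 h1
  have hmN : m = N := by
    rcases eq_or_lt_of_le hm2 with h | h
    · exact h
    · exfalso
      have := hF.mono m N h
      rw [hm] at this
      obtain ⟨_, hle, _⟩ := hF.mem N hN le_rfl
      exact absurd this (not_lt.mpr hle)
  rw [hmN] at hm
  have heq : (p (N:ℤ) : ℚ) / q (N:ℤ) = ((1:ℤ):ℚ) / ((1:ℤ):ℚ) := by rw [hm]; norm_num
  have h2 := Rat.div_int_inj (hF.qpos N) one_pos (hF.coprime N)
    (by simp) heq
  exact ⟨h2.1, h2.2⟩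

/-- The first Farey fraction is `1/Q`. -/
lemma farey_first {Q N : ℕ} {p q : ℤ → ℤ} (hQ : 2 ≤ Q) (hF : IsFarey Q N p q)
    (hN : 1 ≤ (N:ℤ)) : p 1 = 1 ∧ q 1 = (Q:ℤ) := by
  have hQ0 : (0:ℤ) < (Q:ℤ) := by exact_mod_cast (by omega : 0 < Q)
  have hQQ : (0:ℚ) < (Q:ℚ) := by exact_mod_cast (by omega : 0 < Q)
  have h1 : ((1:ℤ):ℚ) / ((Q:ℤ):ℚ) ∈ fareySet Q := by
    refine ⟨by positivity, ?_, ?_⟩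
    · rw [div_le_one (by exact_mod_cast hQ0)]; exact_mod_cast (by omega : (1:ℤ) ≤ Q)
    · have := Rat.den_div_eq_of_coprime hQ0 (by simp [Int.gcd] : Int.gcd 1 (Q:ℤ) = 1)
      omega
  obtain ⟨m, hm1, hm2, hm⟩ := hF.surj _ h1
  have hb := farey_bounds hF (le_refl (1:ℤ)) hN
  have hm1' : m = 1 := by
    rcases eq_or_lt_of_le hm1 with h | h
    · omega
    · exfalso
      have hlt := hF.mono 1 m h
      rw [hm] at hlt
      have : ((1:ℤ):ℚ) / ((Q:ℤ):ℚ) ≤ (p 1 : ℚ) / q 1 := by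
        rw [div_le_div_iff₀ (by exact_mod_cast hQ0) (by exact_mod_cast hF.qpos 1)]
        have : (1:ℤ) * q 1 ≤ p 1 * Q := by nlinarith [hb.1, hb.2.1, hb.2.2]
        exact_mod_cast this
      exact absurd hlt (not_lt.mpr this)
  rw [hm1'] at hm
  have h2 := Rat.div_int_inj (hF.qpos 1) hQ0 (hF.coprime 1)
    (by simp) hm
  exact ⟨h2.1, h2.2⟩

/-- Unimodularity of consecutive Farey fractions, for indices inside `[1, N]`. -/
lemma det_consec {Q N : ℕ} {p q : ℤ → ℤ} (hQ : 2 ≤ Q) (hF : IsFarey Q N p q)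
    {j : ℤ} (hj1 : 1 ≤ j) (hj2 : j + 1 ≤ (N:ℤ)) :
    p (j+1) * q j - p j * q (j+1) = 1 := by
  obtain ⟨ha, hab, hbQ⟩ := farey_bounds hF hj1 (by omega)
  obtain ⟨hc, hcd, hdQ⟩ := farey_bounds hF (by omega : (1:ℤ) ≤ j+1) hj2
  have hb : 0 < q j := hF.qpos j
  have hd : 0 < q (j+1) := hF.qpos (j+1)
  set a := p j with hadef
  set b := q j with hbdef
  set c := p (j+1) with hcdef
  set d := q (j+1) with hddef
  have hlt : (a:ℚ)/b < (c:ℚ)/d := hF.mono j (j+1) (by omega)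
  have hltZ : a * d < c * b := by
    rw [div_lt_div_iff₀ (by exact_mod_cast hb) (by exact_mod_cast hd)] at hlt
    exact_mod_cast hlt
  have haltb : a < b := by
    rcases lt_or_eq_of_le hab with h | h
    · exact h
    · exfalso; nlinarith
  have hbez : ∃ x y : ℤ, b * x - a * y = 1 := by
    have h := Int.gcd_eq_gcd_ab a b
    have : (Int.gcd a b : ℤ) = 1 := by rw [hF.coprime j]; rfl
    exact ⟨Int.gcdB a b, -Int.gcdA a b, by rw [this] at h; linarith⟩
  obtain ⟨x0, y0, hxy0⟩ := hbez
  set t := ((Q:ℤ) - y0) / b with htdef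
  set y := y0 + t * b with hydef
  set x := x0 + t * a with hxdef
  have hbxy : b * x - a * y = 1 := by simp only [hxdef, hydef]; ring_nf; linarith [hxy0]
  have hyQ : y ≤ (Q:ℤ) ∧ (Q:ℤ) - b < y := by
    have h1 := Int.mul_ediv_add_emod ((Q:ℤ) - y0) b
    rw [← htdef] at h1
    have h2 := Int.emod_nonneg ((Q:ℤ) - y0) (by omega : b ≠ 0)
    have h3 := Int.emod_lt_of_pos ((Q:ℤ) - y0) hb
    have hcomm : t * b = b * t := mul_comm _ _
    constructor <;> · simp only [hydef]; omega
  have hy1 : 1 ≤ y := by omega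
  have hx1 : 1 ≤ x := by nlinarith
  have hxley : x ≤ y := by nlinarith
  have hgxy : Int.gcd x y = 1 := by
    have : IsCoprime x y := ⟨b, -a, by linarith⟩
    exact Int.isCoprime_iff_gcd_eq_one.mp this
  have hmem := farey_mem' hx1 hxley hgxy hyQ.1
  have hax : (a:ℚ)/b < (x:ℚ)/y := by
    rw [div_lt_div_iff₀ (by exact_mod_cast hb) (by exact_mod_cast hy1)]
    have : a * y < x * b := by linarith
    exact_mod_cast this
  have hxyeq : (x:ℚ)/y = (c:ℚ)/d := by
    rcases lt_trichotomy ((x:ℚ)/y) ((c:ℚ)/d) with h | h | h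
    · exfalso
      obtain ⟨m, hm1, hm2, hm⟩ := hF.surj _ hmem
      have l1 : j < m := farey_idx_lt hF (by rw [hm]; exact hax)
      have l2 : m < j + 1 := farey_idx_lt hF (by rw [hm]; exact h)
      omega
    · exact h
    · exfalso
      have hZ : c * y < x * d := by
        rw [div_lt_div_iff₀ (by exact_mod_cast hd) (by exact_mod_cast hy1)] at h
        exact_mod_cast h
      have key : d * (b * x - a * y) = (d * x - c * y) * b + (b * c - a * d) * y := by ring
      rw [hbxy] at key
      nlinarith [hyQ.2, hbQ, hdQ]
  have := Rat.div_int_inj (by exact_mod_cast hy1 : (0:ℤ) < y) hd hgxy (hF.coprime (j+1)) hxyeq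
  obtain ⟨hxc, hyd⟩ := this
  have hxc' : c = x := hxc.symm
  have hyd' : d = y := hyd.symm
  rw [hxc', hyd']
  linarith

/-- Unimodularity of consecutive Farey fractions, for all integer indices. -/
lemma det_all {Q N : ℕ} {p q : ℤ → ℤ} (hQ : 2 ≤ Q) (hF : IsFarey Q N p q)
    (hN : 1 ≤ (N:ℤ)) (j : ℤ) : p (j+1) * q j - p j * q (j+1) = 1 := by
  set D : ℤ → ℤ := fun j => p (j+1) * q j - p j * q (j+1) with hD
  have hper : ∀ m : ℤ, D (m + N) = D m := by
    intro m
    have h1 : p (m + 1 + N) = p (m+1) + q (m+1) := hF.period_p (m+1)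
    have h2 : q (m + 1 + N) = q (m+1) := hF.period_q (m+1)
    have h3 := hF.period_p m
    have h4 := hF.period_q m
    simp only [hD]
    rw [show m + (N:ℤ) + 1 = m + 1 + N by ring, h1, h2, h3, h4]
    ring
  have hbase : ∀ m : ℤ, 1 ≤ m → m ≤ (N:ℤ) → D m = 1 := by
    intro m hm1 hm2
    rcases eq_or_lt_of_le hm2 with h | h
    · subst h
      obtain ⟨hp1, hq1⟩ := farey_first hQ hF hN
      obtain ⟨hpN, hqN⟩ := farey_last hQ hF hN
      have h1 : p ((N:ℤ) + 1) = p 1 + q 1 := by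
        have := hF.period_p 1; rwa [show (1:ℤ) + (N:ℤ) = (N:ℤ) + 1 by ring] at this
      have h2 : q ((N:ℤ) + 1) = q 1 := by
        have := hF.period_q 1; rwa [show (1:ℤ) + (N:ℤ) = (N:ℤ) + 1 by ring] at this
      simp only [hD]
      rw [h1, h2, hp1, hq1, hpN, hqN]
      ring
    · exact det_consec hQ hF hm1 (by omega)
  have hshift : ∀ (t : ℤ) (m : ℤ), D (m + t * N) = D m := by
    intro t
    induction t using Int.induction_on with
    | zero => intro m; simp
    | succ n ih =>
        intro m
        rw [show m + ((n:ℤ)+1) * N = (m + n * N) + N by ring, hper, ih]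
    | pred n ih =>
        intro m
        have := hper (m + (-(n:ℤ)-1) * N)
        rw [show m + (-(n:ℤ)-1) * N + N = m + (-(n:ℤ)) * N by ring] at this
        rw [← this]
        exact ih m
  have hN0 : (N:ℤ) ≠ 0 := by omega
  set t := (j - 1) / (N:ℤ) with ht
  set j0 := j - t * N with hj0
  have e1 := Int.mul_ediv_add_emod (j - 1) (N:ℤ)
  have e2 := Int.emod_nonneg (j - 1) hN0
  have e3 := Int.emod_lt_of_pos (j - 1) (by omega : (0:ℤ) < N)
  rw [← ht] at e1
  have hcomm : t * (N:ℤ) = (N:ℤ) * t := mul_comm _ _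
  have hj01 : 1 ≤ j0 := by simp only [hj0]; omega
  have hj02 : j0 ≤ (N:ℤ) := by simp only [hj0]; omega
  have : D j = D j0 := by
    rw [show j = j0 + t * N by simp only [hj0]; ring]
    exact hshift t j0
  rw [show p (j+1) * q j - p j * q (j+1) = D j from rfl, this]
  exact hbase j0 hj01 hj02

/-- For `k ≥ 3`, `ν_k(γ_i) = ν_2(γ_{i+k-2}) ν_{k-1}(γ_i) - ν_{k-2}(γ_i)`. -/
theorem nuk_recurrence (Q N : ℕ) (p q : ℤ → ℤ) (hQ : 2 ≤ Q)
    (hF : IsFarey Q N p q) (i : ℤ) (h1 : 1 ≤ i) (h2 : i ≤ (N : ℤ))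
    (k : ℕ) (hk : 3 ≤ k) :
    nuk p q k i = nuk p q 2 (i + k - 2) * nuk p q (k - 1) i - nuk p q (k - 2) i := by
  have hN : 1 ≤ (N:ℤ) := le_trans h1 h2
  set j : ℤ := i + k - 2 with hj
  have d1 := det_all hQ hF hN j
  have d2 := det_all hQ hF hN (j - 1)
  rw [show j - 1 + 1 = j by ring] at d2
  have hk1 : ((k - 1 : ℕ) : ℤ) = (k : ℤ) - 1 := by omega
  have hk2 : ((k - 2 : ℕ) : ℤ) = (k : ℤ) - 2 := by omega
  simp only [nuk, hk1, hk2]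
  rw [show i + ((k:ℤ)) - 1 = j + 1 by rw [hj]; ring,
      show i + ((k:ℤ) - 1) - 1 = j by rw [hj]; ring,
      show i + ((k:ℤ) - 2) - 1 = j - 1 by rw [hj]; ring,
      show j + ((2:ℕ):ℤ) - 1 = j + 1 by push_cast; ring]
  have hp : p j * (p (j+1) * q (j-1) - p (j-1) * q (j+1)) = p (j+1) + p (j-1) := by
    linear_combination p (j+1) * d2 + p (j-1) * d1
  have hq : q j * (p (j+1) * q (j-1) - p (j-1) * q (j+1)) = q (j+1) + q (j-1) := by
    linear_combination q (j+1) * d2 + q (j-1) * d1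
  linear_combination p (i-1) * hq - q (i-1) * hp
end

section
/- Let Q be fixed and k a positive integer. For each fraction γ_i in F_Q, ν_k(γ_i) = χ(2k−1)·K_{k−1}(−ν_2(γ_i), ν_2(γ_{i+1}), ..., (−1)^{k−1}ν_2(γ_{i+k−2})), where χ(n) is the Kronecker symbol (n/2), i.e., χ(n) = 0 if n is even, 1 if n ≡ ±1 (mod 8), and −1 if n ≡ ±3 (mod 8). -/
open MeasureTheory

/-- The convergent (continuant) polynomials, as functions of an assignment of integer
values to the variables `x_1, x_2, …` : `K_0 = 1`, `K_1 = x_1`,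
`K_n = x_n K_{n-1} + K_{n-2}`. -/
def convK : ℕ → (ℕ → ℤ) → ℤ
  | 0, _ => 1
  | 1, x => x 1
  | (n + 2), x => x (n + 2) * convK (n + 1) x + convK n x

/-- The Kronecker symbol `(n/2)`. -/
def kron2 (n : ℤ) : ℤ :=
  if n % 2 = 0 then 0 else if n % 8 = 1 ∨ n % 8 = 7 then 1 else -1

lemma kron2_odd (n : ℤ) : kron2 (2*n+1) = if n % 4 = 0 ∨ n % 4 = 3 then 1 else -1 := by
  unfold kron2; split_ifs <;> omega

lemma kron2_shift (n : ℕ) :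
    kron2 (2*(n:ℤ)+5) = -kron2 (2*(n:ℤ)+1) ∧
    kron2 (2*(n:ℤ)+3) = (-1)^n * kron2 (2*(n:ℤ)+5) := by
  have e1 := kron2_odd (n:ℤ)
  have e2 := kron2_odd ((n:ℤ)+1)
  have e3 := kron2_odd ((n:ℤ)+2)
  rw [show 2*((n:ℤ)+1)+1 = 2*(n:ℤ)+3 by ring] at e2
  rw [show 2*((n:ℤ)+2)+1 = 2*(n:ℤ)+5 by ring] at e3
  have e4 : ((-1:ℤ)^n = 1 ∧ (n:ℤ)%2 = 0) ∨ ((-1:ℤ)^n = -1 ∧ (n:ℤ)%2 = 1) := by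
    rcases Nat.even_or_odd n with h | h
    · obtain ⟨t, ht⟩ := h
      exact Or.inl ⟨Even.neg_one_pow ⟨t, ht⟩, by omega⟩
    · obtain ⟨t, ht⟩ := h
      exact Or.inr ⟨Odd.neg_one_pow ⟨t, ht⟩, by omega⟩
  rw [e1, e2, e3]
  rcases e4 with ⟨hp, hm⟩ | ⟨hp, hm⟩ <;> rw [hp] <;>
    constructor <;> split_ifs <;> omega

lemma nuk_two (p q : ℤ → ℤ) (j : ℤ) :
    nuk p q 2 j = p (j+1) * q (j-1) - p (j-1) * q (j+1) := by
  unfold nuk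
  rw [show j + ((2:ℕ):ℤ) - 1 = j + 1 by push_cast; ring]

lemma nuk_succ (p q : ℤ → ℤ)
    (hrecp : ∀ j : ℤ, p (j+1) = nuk p q 2 j * p j - p (j-1))
    (hrecq : ∀ j : ℤ, q (j+1) = nuk p q 2 j * q j - q (j-1))
    (n : ℕ) (i : ℤ) :
    nuk p q (n+1+1+1) i = nuk p q 2 (i+(n:ℤ)+1) * nuk p q (n+1+1) i - nuk p q (n+1) i := by
  have hp' := hrecp (i+(n:ℤ)+1)
  have hq' := hrecq (i+(n:ℤ)+1)
  rw [show i+(n:ℤ)+1-1 = i+(n:ℤ) by ring] at hp' hq'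
  set m := nuk p q 2 (i+(n:ℤ)+1) with hm
  rw [show nuk p q (n+1+1+1) i = p (i + (n:ℤ)+1+1) * q (i-1) - p (i-1) * q (i + (n:ℤ)+1+1) from by
        unfold nuk; rw [show i + ((n+1+1+1:ℕ):ℤ) - 1 = i + (n:ℤ)+1+1 by push_cast; ring]]
  rw [show nuk p q (n+1+1) i = p (i + (n:ℤ)+1) * q (i-1) - p (i-1) * q (i + (n:ℤ)+1) from by
        unfold nuk; rw [show i + ((n+1+1:ℕ):ℤ) - 1 = i + (n:ℤ)+1 by push_cast; ring]]
  rw [show nuk p q (n+1) i = p (i + (n:ℤ)) * q (i-1) - p (i-1) * q (i + (n:ℤ)) from by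
        unfold nuk; rw [show i + ((n+1:ℕ):ℤ) - 1 = i + (n:ℤ) by push_cast; ring]]
  rw [hp', hq']
  ring

set_option maxHeartbeats 1600000 in
lemma isfarey_det (Q N : ℕ) (p q : ℤ → ℤ) (hQ : 1 ≤ Q) (hF : IsFarey Q N p q) :
    ∀ j : ℤ, p (j+1) * q j - p j * q (j+1) = 1 := by
  have hQ' : (1:ℤ) ≤ (Q:ℤ) := by exact_mod_cast hQ
  have hmem : ∀ j : ℤ, 1 ≤ j → j ≤ (N:ℤ) → 0 < p j ∧ p j ≤ q j ∧ q j ≤ (Q:ℤ) := by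
    intro j hj1 hj2
    obtain ⟨hpos, hle, hden⟩ := hF.mem j hj1 hj2
    have hq := hF.qpos j
    have hq' : (0:ℚ) < (q j : ℚ) := by exact_mod_cast hq
    have hden' : (((p j : ℚ) / (q j : ℚ)).den : ℤ) = q j :=
      Rat.den_div_eq_of_coprime hq (hF.coprime j)
    refine ⟨?_, ?_, ?_⟩
    · rcases div_pos_iff.mp hpos with ⟨h1, _⟩ | ⟨_, h2⟩
      · exact_mod_cast h1
      · linarith
    · have := (div_le_one hq').mp hle
      exact_mod_cast this
    · have h5 : (((p j : ℚ) / (q j : ℚ)).den : ℤ) ≤ (Q:ℤ) := by exact_mod_cast hden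
      linarith [hden' ▸ h5]
  have h1mem : (1:ℚ) ∈ fareySet Q := ⟨one_pos, le_refl 1, by simpa using hQ⟩
  have hN1 : (1:ℤ) ≤ (N:ℤ) := by
    obtain ⟨m, hm1, hm2, _⟩ := hF.surj 1 h1mem
    linarith
  have hNval : p N = 1 ∧ q N = 1 := by
    obtain ⟨m, hm1, hm2, hmv⟩ := hF.surj 1 h1mem
    have hmN : m = (N:ℤ) := by
      by_contra h
      have hlt : m < (N:ℤ) := lt_of_le_of_ne hm2 h
      have h1 := hF.mono m N hlt
      rw [hmv] at h1
      have h2 := (hF.mem N hN1 le_rfl).2.1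
      linarith
    subst hmN
    have hq := hF.qpos (N:ℤ)
    have hq' : ((q (N:ℤ) : ℚ)) ≠ 0 := by positivity
    have hpq : (p (N:ℤ) : ℚ) = (q (N:ℤ) : ℚ) := by
      field_simp at hmv; exact_mod_cast hmv
    have hpq' : p (N:ℤ) = q (N:ℤ) := by exact_mod_cast hpq
    have hco := hF.coprime (N:ℤ)
    rw [hpq'] at hco
    have : (q (N:ℤ)).natAbs = 1 := by rwa [Int.gcd_self] at hco
    constructor <;> omega
  have hp1 : p 1 = 1 := by
    obtain ⟨hp1pos, _, hq1Q⟩ := hmem 1 le_rfl hN1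
    by_contra h
    have hp2 : 2 ≤ p 1 := by omega
    have hq1 := hF.qpos 1
    have hq1' : (0:ℚ) < (q 1 : ℚ) := by exact_mod_cast hq1
    have hmemx : ((1:ℤ) : ℚ) / (q 1 : ℚ) ∈ fareySet Q := by
      refine ⟨by positivity, ?_, ?_⟩
      · rw [div_le_one hq1']
        exact_mod_cast hq1
      · have hden : ((((1:ℤ):ℚ) / (q 1 : ℚ)).den : ℤ) = q 1 :=
          Rat.den_div_eq_of_coprime hq1 (by simpa using Int.gcd_one_left (q 1))
        have h5 : ((((1:ℤ):ℚ) / (q 1 : ℚ)).den : ℤ) ≤ (Q:ℤ) := by rw [hden]; linarith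
        exact_mod_cast h5
    obtain ⟨m, hm1, hm2, hmv⟩ := hF.surj _ hmemx
    have hlt : (p m : ℚ) / (q m) < (p 1 : ℚ) / (q 1) := by
      rw [hmv]
      apply div_lt_div_of_pos_right ?_ hq1'
      · push_cast
        exact_mod_cast (show (1:ℤ) < p 1 by omega)
    rcases lt_trichotomy m 1 with h' | h' | h'
    · linarith
    · rw [h'] at hlt; linarith
    · have := hF.mono 1 m h'; linarith
  have hdet_mid : ∀ j : ℤ, 1 ≤ j → j + 1 ≤ (N:ℤ) → p (j+1) * q j - p j * q (j+1) = 1 := by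
    intro j hj1 hj2
    have hb : 0 < q j := hF.qpos j
    have hd : 0 < q (j+1) := hF.qpos (j+1)
    have hb' : (0:ℚ) < (q j : ℚ) := by exact_mod_cast hb
    have hd' : (0:ℚ) < (q (j+1) : ℚ) := by exact_mod_cast hd
    obtain ⟨hapos, hab, hbQ⟩ := hmem j hj1 (by linarith)
    obtain ⟨hcpos, hcd, hdQ⟩ := hmem (j+1) (by linarith) hj2
    have hlt : (p j : ℚ) / (q j) < (p (j+1) : ℚ) / (q (j+1)) := hF.mono j (j+1) (by linarith)
    have had : p j * q (j+1) < p (j+1) * q j := by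
      have := (div_lt_div_iff₀ hb' hd').mp hlt
      exact_mod_cast this
    have haltb : p j < q j := by nlinarith
    have hco : IsCoprime (p j) (q j) := Int.isCoprime_iff_gcd_eq_one.mpr (hF.coprime j)
    obtain ⟨x, y, hxy⟩ := hco
    have hstep : ∃ t : ℤ, (Q:ℤ) - q j < -x + q j * t ∧ -x + q j * t ≤ (Q:ℤ) := by
      refine ⟨((Q:ℤ) + x) / q j, ?_, ?_⟩ <;>
      · have h1 := Int.mul_ediv_add_emod ((Q:ℤ) + x) (q j)
        have h2 := Int.emod_nonneg ((Q:ℤ) + x) (ne_of_gt hb)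
        have h3 := Int.emod_lt_of_pos ((Q:ℤ) + x) hb
        linarith
    obtain ⟨t, htl, htr⟩ := hstep
    obtain ⟨u, v, huv, hvl, hvr⟩ :
        ∃ u v : ℤ, q j * u - p j * v = 1 ∧ (Q:ℤ) - q j < v ∧ v ≤ (Q:ℤ) :=
      ⟨y + p j * t, -x + q j * t, by linear_combination hxy, htl, htr⟩
    have hv0 : 0 < v := by linarith
    have hv1 : 1 ≤ v := hv0
    have hu0 : 0 < u := by nlinarith [mul_pos hapos hv0]
    have huvle : u ≤ v := by
      have h1 : p j * v ≤ (q j - 1) * v := by nlinarith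
      have h2 : q j * u ≤ q j * v := by nlinarith
      exact le_of_mul_le_mul_left h2 hb
    have hcouv : IsCoprime u v := ⟨q j, -(p j), by linear_combination huv⟩
    have hgcduv : Int.gcd u v = 1 := Int.isCoprime_iff_gcd_eq_one.mp hcouv
    have hv' : (0:ℚ) < (v : ℚ) := by exact_mod_cast hv0
    have hmemuv : ((u:ℤ):ℚ) / ((v:ℤ):ℚ) ∈ fareySet Q := by
      refine ⟨?_, ?_, ?_⟩
      · have hu' : (0:ℚ) < (u:ℚ) := by exact_mod_cast hu0
        positivity
      · rw [div_le_one hv']; exact_mod_cast huvle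
      · have hden : ((((u:ℤ):ℚ) / ((v:ℤ):ℚ)).den : ℤ) = v := Rat.den_div_eq_of_coprime hv0 hgcduv
        have h5 : ((((u:ℤ):ℚ) / ((v:ℤ):ℚ)).den : ℤ) ≤ (Q:ℤ) := by rw [hden]; exact hvr
        exact_mod_cast h5
    obtain ⟨m, hm1, hm2, hmval⟩ := hF.surj _ hmemuv
    have hγjm : (p j : ℚ) / (q j) < (p m : ℚ) / (q m) := by
      rw [hmval, div_lt_div_iff₀ hb' hv']
      have hint : p j * v < u * q j := by linarith [huv, mul_comm u (q j)]
      exact_mod_cast hint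
    have hmgt : j < m := by
      by_contra h
      push_neg at h
      rcases eq_or_lt_of_le h with h' | h'
      · rw [h'] at hγjm; linarith
      · have := hF.mono m j h'; linarith
    have hge : (p (j+1) : ℚ) / (q (j+1)) ≤ (p m : ℚ) / (q m) := by
      rcases eq_or_lt_of_le (show j + 1 ≤ m by linarith) with h' | h'
      · rw [h']
      · exact le_of_lt (hF.mono (j+1) m h')
    have hcvdu : p (j+1) * v ≤ q (j+1) * u := by
      rw [hmval] at hge
      have h5 := (div_le_div_iff₀ hd' hv').mp hge
      have h6 : p (j+1) * v ≤ u * q (j+1) := by exact_mod_cast h5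
      linarith [mul_comm u (q (j+1))]
    have he1 : 1 ≤ p (j+1) * q j - p j * q (j+1) := by
      have h0 : 0 < p (j+1) * q j - p j * q (j+1) := by linarith
      linarith [Int.lt_iff_add_one_le.mp h0]
    have hid : q (j+1) = q j * (q (j+1) * u - p (j+1) * v) +
        v * (p (j+1) * q j - p j * q (j+1)) := by linear_combination (-(q (j+1))) * huv
    have hdu0 : q (j+1) * u - p (j+1) * v = 0 := by
      by_contra h
      have h1' : 1 ≤ q (j+1) * u - p (j+1) * v := by
        have h0 : 0 < q (j+1) * u - p (j+1) * v := lt_of_le_of_ne (by linarith) (Ne.symm h)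
        linarith [Int.lt_iff_add_one_le.mp h0]
      have t1 : q j ≤ q j * (q (j+1) * u - p (j+1) * v) :=
        le_mul_of_one_le_right (le_of_lt hb) h1'
      have t2 : v ≤ v * (p (j+1) * q j - p j * q (j+1)) :=
        le_mul_of_one_le_right (by linarith) he1
      linarith
    have hvd : v = q (j+1) := by
      have hdvd1 : v ∣ q (j+1) := by
        have h5 : v ∣ q (j+1) * u := ⟨p (j+1), by linarith [mul_comm v (p (j+1))]⟩
        exact (hcouv.symm).dvd_of_dvd_mul_right h5
      have hcocd : IsCoprime (q (j+1)) (p (j+1)) :=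
        (Int.isCoprime_iff_gcd_eq_one.mpr (hF.coprime (j+1))).symm
      have hdvd2 : q (j+1) ∣ v := by
        have h5 : q (j+1) ∣ v * p (j+1) :=
          ⟨u, by linarith [mul_comm v (p (j+1)), mul_comm (q (j+1)) u]⟩
        exact hcocd.dvd_of_dvd_mul_right h5
      exact Int.dvd_antisymm (by linarith) (by linarith) hdvd1 hdvd2
    have hud : u = p (j+1) := by
      have h3 := hdu0
      rw [← hvd] at h3
      have h2 : v * u = v * p (j+1) := by linarith [mul_comm (p (j+1)) v]
      exact mul_left_cancel₀ (ne_of_gt hv0) h2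
    rw [hud, hvd] at huv
    linarith [mul_comm (q j) (p (j+1)), mul_comm (p j) (q (j+1))]
  have hdet_N : p ((N:ℤ)+1) * q ((N:ℤ)) - p ((N:ℤ)) * q ((N:ℤ)+1) = 1 := by
    have e1 := hF.period_p 1
    have e2 := hF.period_q 1
    rw [show (N:ℤ)+1 = 1 + (N:ℤ) by ring, e1, e2, hNval.1, hNval.2, hp1]
    ring
  have hdet_base : ∀ j : ℤ, 1 ≤ j → j ≤ (N:ℤ) → p (j+1) * q j - p j * q (j+1) = 1 := by
    intro j hj1 hj2
    rcases eq_or_lt_of_le hj2 with h' | h'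
    · rw [h']; exact hdet_N
    · exact hdet_mid j hj1 (by linarith [Int.lt_iff_add_one_le.mp h'])
  have hdet_shift : ∀ j : ℤ, p (j+(N:ℤ)+1) * q (j+(N:ℤ)) - p (j+(N:ℤ)) * q (j+(N:ℤ)+1) =
      p (j+1) * q j - p j * q (j+1) := by
    intro j
    have e1 := hF.period_p (j+1)
    have e2 := hF.period_q (j+1)
    have e3 := hF.period_p j
    have e4 := hF.period_q j
    rw [show j + (N:ℤ) + 1 = (j+1) + (N:ℤ) by ring, e1, e2, e3, e4]
    ring
  have hshift_all : ∀ t : ℤ, ∀ j : ℤ,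
      p (j + t*(N:ℤ) + 1) * q (j + t*(N:ℤ)) - p (j + t*(N:ℤ)) * q (j + t*(N:ℤ) + 1) =
      p (j+1) * q j - p j * q (j+1) := by
    intro t
    induction t using Int.induction_on with
    | zero => intro j; norm_num
    | succ n ihn =>
      intro j
      have h1 := hdet_shift (j + (n:ℤ)*(N:ℤ))
      rw [show j + ((n:ℤ)+1)*(N:ℤ) = j + (n:ℤ)*(N:ℤ) + (N:ℤ) by ring]
      rw [h1]
      exact ihn j
    | pred n ihn =>
      intro j
      have h1 := hdet_shift (j + (-(n:ℤ)-1)*(N:ℤ))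
      rw [show j + (-(n:ℤ)-1)*(N:ℤ) + (N:ℤ) = j + (-(n:ℤ))*(N:ℤ) by ring] at h1
      rw [← ihn j, ← h1]
  intro j
  have hN0 : (0:ℤ) < (N:ℤ) := by linarith
  have h1 := Int.mul_ediv_add_emod (j-1) (N:ℤ)
  have h2 := Int.emod_nonneg (j-1) (ne_of_gt hN0)
  have h3 := Int.emod_lt_of_pos (j-1) hN0
  set r := (j-1) % (N:ℤ) with hr
  set d := (j-1) / (N:ℤ) with hd
  have hjeq : j = (r + 1) + d * (N:ℤ) := by
    have hc : (N:ℤ) * d = d * (N:ℤ) := mul_comm _ _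
    linarith
  have hfin := hshift_all d (r+1)
  rw [hjeq]
  rw [show r + 1 + d*(N:ℤ) + 1 = (r+1) + d*(N:ℤ) + 1 by ring]
  rw [hfin]
  exact hdet_base (r+1) (by linarith) (by linarith)

lemma aux_main (p q : ℤ → ℤ)
    (hdet : ∀ j : ℤ, p (j+1) * q j - p j * q (j+1) = 1)
    (hrecp : ∀ j : ℤ, p (j+1) = nuk p q 2 j * p j - p (j-1))
    (hrecq : ∀ j : ℤ, q (j+1) = nuk p q 2 j * q j - q (j-1)) :
    ∀ k : ℕ, ∀ i : ℤ,
      nuk p q (k+1) i =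
        kron2 (2*(k:ℤ)+1) * convK k (fun j => (-1) ^ j * nuk p q 2 (i + j - 1)) := by
  suffices H : ∀ k : ℕ,
      (∀ i : ℤ, nuk p q (k+1) i =
        kron2 (2*(k:ℤ)+1) * convK k (fun j => (-1) ^ j * nuk p q 2 (i + j - 1))) ∧
      (∀ i : ℤ, nuk p q (k+1+1) i =
        kron2 (2*((k+1:ℕ):ℤ)+1) * convK (k+1) (fun j => (-1) ^ j * nuk p q 2 (i + j - 1))) by
    intro k i; exact (H k).1 i
  intro k
  induction k with
  | zero =>
    constructor
    · intro i
      have h := hdet (i-1)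
      rw [show i - 1 + 1 = i by ring] at h
      have h0 : kron2 (2*((0:ℕ):ℤ)+1) = 1 := by norm_num [kron2]
      rw [h0]
      simp only [convK, mul_one]
      unfold nuk
      rw [show i + ((0+1:ℕ):ℤ) - 1 = i by push_cast; ring]
      linarith
    · intro i
      have h2 : kron2 (2*((0+1:ℕ):ℤ)+1) = -1 := by norm_num [kron2]
      rw [h2]
      simp only [convK]
      rw [show i + ((1:ℕ):ℤ) - 1 = i by push_cast; ring]
      norm_num
  | succ n ih =>
    refine ⟨ih.2, ?_⟩
    intro i
    rw [nuk_succ p q hrecp hrecq n i, ih.2 i, ih.1 i]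
    have hconv : convK (n+1+1) (fun j : ℕ => (-1:ℤ)^j * nuk p q 2 (i + j - 1)) =
        ((-1:ℤ)^n * nuk p q 2 (i + (n:ℤ) + 1)) *
          convK (n+1) (fun j : ℕ => (-1:ℤ)^j * nuk p q 2 (i + j - 1)) +
        convK n (fun j : ℕ => (-1:ℤ)^j * nuk p q 2 (i + j - 1)) := by
      show convK (n+2) _ = _
      rw [convK]
      rw [show i + ((n+2:ℕ):ℤ) - 1 = i + (n:ℤ) + 1 by push_cast; ring]
      rw [show ((-1:ℤ))^(n+2) = (-1)^n by rw [pow_succ, pow_succ]; ring]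
    rw [hconv]
    obtain ⟨hk1, hk2⟩ := kron2_shift n
    rw [show (2*((n+1:ℕ):ℤ)+1) = 2*(n:ℤ)+3 by push_cast; ring,
        show (2*((n+1+1:ℕ):ℤ)+1) = 2*(n:ℤ)+5 by push_cast; ring, hk2, hk1]
    ring

/-- Theorem 1:
`ν_k(γ_i) = (2k-1 / 2) · K_{k-1}(-ν_2(γ_i), ν_2(γ_{i+1}), …, (-1)^{k-1} ν_2(γ_{i+k-2}))`. -/
theorem nuk_eq_convergent_polynomial (Q N : ℕ) (p q : ℤ → ℤ) (hQ : 1 ≤ Q)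
    (hF : IsFarey Q N p q) (k : ℕ) (hk : 1 ≤ k)
    (i : ℤ) (h1 : 1 ≤ i) (h2 : i ≤ (N : ℤ)) :
    nuk p q k i =
      kron2 (2 * k - 1) *
        convK (k - 1) (fun j => (-1) ^ j * nuk p q 2 (i + j - 1)) := by
  have hdet := isfarey_det Q N p q hQ hF
  have hrecp : ∀ j : ℤ, p (j+1) = nuk p q 2 j * p j - p (j-1) := by
    intro j
    have d0 := hdet j
    have d1 := hdet (j-1)
    rw [show j - 1 + 1 = j by ring] at d1
    rw [nuk_two]
    linear_combination (-(p (j+1))) * d1 + (-(p (j-1))) * d0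
  have hrecq : ∀ j : ℤ, q (j+1) = nuk p q 2 j * q j - q (j-1) := by
    intro j
    have d0 := hdet j
    have d1 := hdet (j-1)
    rw [show j - 1 + 1 = j by ring] at d1
    rw [nuk_two]
    linear_combination (-(q (j+1))) * d1 + (-(q (j-1))) * d0
  obtain ⟨k', rfl⟩ : ∃ k', k = k' + 1 := ⟨k - 1, by omega⟩
  have h := aux_main p q hdet hrecp hrecq k' i
  rw [show (2 * ((k' + 1 : ℕ) : ℤ) - 1) = 2 * (k' : ℤ) + 1 by push_cast; ring]
  simpa using h
end

section
/- The map T(x,y) = (y, ⌊(1+x)/y⌋·y − x) maps the Farey triangle T = {(x,y) ∈ [0,1]² : x + y > 1} bijectively onto itself. -/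
open MeasureTheory

/-- The Farey triangle `𝒯 = {(x,y) ∈ [0,1]² : x + y > 1}`. -/
def fareyTriangle : Set (ℝ × ℝ) :=
  {v | v.1 ∈ Set.Icc (0 : ℝ) 1 ∧ v.2 ∈ Set.Icc (0 : ℝ) 1 ∧ 1 < v.1 + v.2}

/-- The Farey triangle map `T(x,y) = (y, ⌊(1+x)/y⌋·y − x)`. -/
noncomputable def Tmap (v : ℝ × ℝ) : ℝ × ℝ :=
  (v.2, (⌊(1 + v.1) / v.2⌋ : ℝ) * v.2 - v.1)

/-- The inverse map. -/
noncomputable def Smap (v : ℝ × ℝ) : ℝ × ℝ :=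
  ((⌊(1 + v.2) / v.1⌋ : ℝ) * v.1 - v.2, v.1)

lemma Tmap_mapsTo : Set.MapsTo Tmap fareyTriangle fareyTriangle := by
  rintro ⟨x, y⟩ ⟨⟨hx0, hx1⟩, ⟨hy0, hy1⟩, hxy⟩
  have hy0' : (0:ℝ) < y := by linarith
  set k : ℤ := ⌊(1+x)/y⌋ with hk
  have h1 : (k:ℝ) * y ≤ 1 + x := by
    have := Int.floor_le ((1+x)/y)
    rw [le_div_iff₀ hy0'] at this; linarith
  have h2 : 1 + x < ((k:ℝ) + 1) * y := by
    have := Int.lt_floor_add_one ((1+x)/y)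
    rw [div_lt_iff₀ hy0'] at this; push_cast at this ⊢; linarith
  simp only [fareyTriangle, Tmap, Set.mem_setOf_eq, Set.mem_Icc] at *
  refine ⟨⟨hy0, hy1⟩, ⟨by nlinarith, by nlinarith⟩, by nlinarith⟩

lemma Smap_mapsTo : Set.MapsTo Smap fareyTriangle fareyTriangle := by
  rintro ⟨x, y⟩ ⟨⟨hx0, hx1⟩, ⟨hy0, hy1⟩, hxy⟩
  have hx0' : (0:ℝ) < x := by linarith
  set k : ℤ := ⌊(1+y)/x⌋ with hk
  have h1 : (k:ℝ) * x ≤ 1 + y := by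
    have := Int.floor_le ((1+y)/x)
    rw [le_div_iff₀ hx0'] at this; linarith
  have h2 : 1 + y < ((k:ℝ) + 1) * x := by
    have := Int.lt_floor_add_one ((1+y)/x)
    rw [div_lt_iff₀ hx0'] at this; push_cast at this ⊢; linarith
  simp only [fareyTriangle, Smap, Set.mem_setOf_eq, Set.mem_Icc] at *
  refine ⟨⟨by nlinarith, by nlinarith⟩, ⟨hx0, hx1⟩, by nlinarith⟩

lemma floor_shift {a b : ℝ} (k : ℤ) (hb : 0 < b) (h0 : 0 ≤ a) (h1 : a < b) :
    ⌊((k:ℝ) * b + a) / b⌋ = k := by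
  have : ((k:ℝ) * b + a) / b = (k:ℝ) + a / b := by field_simp
  rw [this, Int.floor_intCast_add]
  have : ⌊a / b⌋ = 0 := by
    rw [Int.floor_eq_zero_iff]
    constructor
    · positivity
    · rw [div_lt_one hb]; exact h1
  omega

lemma Smap_Tmap : ∀ v ∈ fareyTriangle, Smap (Tmap v) = v := by
  rintro ⟨x, y⟩ ⟨⟨hx0, hx1⟩, ⟨hy0, hy1⟩, hxy⟩
  have hy0' : (0:ℝ) < y := by linarith
  set k : ℤ := ⌊(1+x)/y⌋ with hk
  simp only [Tmap, Smap, Prod.mk.injEq]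
  have heq : 1 + ((k:ℝ) * y - x) = (k:ℝ) * y + (1 - x) := by ring
  rw [heq, floor_shift k hy0' (by linarith) (by linarith)]
  exact ⟨by rw [← hk]; ring, trivial⟩

lemma Tmap_Smap : ∀ v ∈ fareyTriangle, Tmap (Smap v) = v := by
  rintro ⟨x, y⟩ ⟨⟨hx0, hx1⟩, ⟨hy0, hy1⟩, hxy⟩
  have hx0' : (0:ℝ) < x := by linarith
  set k : ℤ := ⌊(1+y)/x⌋ with hk
  simp only [Tmap, Smap, Prod.mk.injEq]
  have heq : 1 + ((k:ℝ) * x - y) = (k:ℝ) * x + (1 - y) := by ring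
  rw [heq, floor_shift k hx0' (by linarith) (by linarith)]
  exact ⟨trivial, by rw [← hk]; ring⟩

/-- `T` maps the Farey triangle bijectively onto itself. -/
theorem Tmap_bijOn : Set.BijOn Tmap fareyTriangle fareyTriangle :=
  Set.InvOn.bijOn ⟨Smap_Tmap, Tmap_Smap⟩ Tmap_mapsTo Smap_mapsTo
end

section
/- The map T(x,y) = (y, ⌊(1+x)/y⌋·y − x) preserves Lebesgue measure on the Farey triangle T = {(x,y) ∈ [0,1]² : x + y > 1}: for any measurable subset Ω ⊆ T, the area of T(Ω) equals the area of Ω. -/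
open MeasureTheory

noncomputable def Lk (k : ℤ) : ℝ × ℝ →ₗ[ℝ] ℝ × ℝ where
  toFun v := (v.2, (k : ℝ) * v.2 - v.1)
  map_add' a b := by ext <;> simp <;> ring
  map_smul' c a := by ext <;> simp <;> ring

lemma Lk_det (k : ℤ) : LinearMap.det (Lk k) = 1 := by
  rw [← LinearMap.det_toMatrix (Module.Basis.finTwoProd ℝ) (Lk k), Matrix.det_fin_two]
  simp [LinearMap.toMatrix_apply, Lk, Module.Basis.coe_finTwoProd_repr,
    Module.Basis.finTwoProd_zero, Module.Basis.finTwoProd_one]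

/-- Inverse of `Lk k`. -/
def Gk (k : ℤ) (v : ℝ × ℝ) : ℝ × ℝ := ((k : ℝ) * v.1 - v.2, v.1)

lemma Lk_image_eq_preimage (k : ℤ) (s : Set (ℝ × ℝ)) :
    (Lk k) '' s = Gk k ⁻¹' s := by
  have h1 : Function.LeftInverse (Gk k) (Lk k) := by
    intro v; simp [Lk, Gk]
  have h2 : Function.RightInverse (Gk k) (Lk k) := by
    intro v; simp [Lk, Gk]
  exact congrFun (Set.image_eq_preimage_of_inverse h1 h2) s

lemma Gk_measurable (k : ℤ) : Measurable (Gk k) := by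
  apply Measurable.prod
  · exact (measurable_const.mul measurable_fst).sub measurable_snd
  · exact measurable_fst

/-- `T` preserves Lebesgue measure on the Farey triangle: the image of any measurable
subset of the triangle has the same area. -/
theorem Tmap_measure_preserving (Ω : Set (ℝ × ℝ)) (hΩ : Ω ⊆ fareyTriangle)
    (hmeas : MeasurableSet Ω) : volume (Tmap '' Ω) = volume Ω := by
  set F : ℝ × ℝ → ℤ := fun v => ⌊(1 + v.1) / v.2⌋ with hF
  have hFmeas : Measurable F := by
    apply Measurable.floor
    exact (measurable_const.add measurable_fst).div measurable_snd
  set S : ℤ → Set (ℝ × ℝ) := fun k => Ω ∩ F ⁻¹' {k} with hS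
  have hSmeas : ∀ k, MeasurableSet (S k) := fun k =>
    hmeas.inter (hFmeas (measurableSet_singleton k))
  have hUnion : Ω = ⋃ k, S k := by
    ext v
    simp only [Set.mem_iUnion, hS, Set.mem_inter_iff, Set.mem_preimage,
      Set.mem_singleton_iff]
    exact ⟨fun hv => ⟨F v, hv, rfl⟩, fun ⟨k, hv, _⟩ => hv⟩
  -- key facts about points of the triangle
  have hkey : ∀ v ∈ Ω, 0 < v.2 ∧ 1 - v.2 < v.1 ∧ v.1 ≤ 1 := by
    intro v hv
    obtain ⟨⟨h0, h1⟩, ⟨h2, h3⟩, h4⟩ := hΩ hv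
    exact ⟨by linarith, by linarith, h1⟩
  -- On S k, Tmap agrees with Lk k
  have hagree : ∀ k, ∀ v ∈ S k, Tmap v = Lk k v := by
    intro k v hv
    have : F v = k := hv.2
    simp only [Tmap, Lk, ← this, hF]
    rfl
  have himg : ∀ k, Tmap '' S k = (Lk k) '' S k := by
    intro k
    apply Set.image_congr
    exact hagree k
  -- injectivity: images are pairwise disjoint
  have hTinj : ∀ v ∈ Ω, ∀ w ∈ Ω, Tmap v = Tmap w → v = w := by
    intro v hv w hw h
    obtain ⟨hy, hx1, hx2⟩ := hkey v hv
    obtain ⟨hy', hx1', hx2'⟩ := hkey w hw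
    have h2 : v.2 = w.2 := congrArg Prod.fst h
    set a := ⌊(1 + v.1) / v.2⌋ with ha
    set b := ⌊(1 + w.1) / w.2⌋ with hb
    have h3 : (a : ℝ) * v.2 - v.1 = (b : ℝ) * w.2 - w.1 := congrArg Prod.snd h
    rw [h2] at h3
    by_cases hkk : a = b
    · rw [hkk] at h3
      have : v.1 = w.1 := by linarith
      exact Prod.ext this h2
    · exfalso
      have habs : v.1 - w.1 = ((a : ℝ) - b) * w.2 := by ring_nf; ring_nf at h3; linarith
      have hd : (1 : ℝ) ≤ |(a : ℝ) - b| := by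
        rw [← Int.cast_sub, ← Int.cast_abs]
        exact_mod_cast Int.one_le_abs (sub_ne_zero.mpr hkk)
      have h5 : |v.1 - w.1| < w.2 := by
        rw [h2] at hx1
        rw [abs_lt]; constructor <;> linarith
      rw [habs, abs_mul, abs_of_pos hy'] at h5
      nlinarith
  have hdisj : Pairwise (Function.onFun Disjoint fun k => Tmap '' S k) := by
    intro k l hkl
    simp only [Function.onFun, Set.disjoint_left]
    rintro x ⟨v, hv, rfl⟩ ⟨w, hw, hvw⟩
    have := hTinj v hv.1 w hw.1 hvw.symm
    exact hkl (hv.2.symm.trans (this ▸ hw.2))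
  have himgmeas : ∀ k, MeasurableSet (Tmap '' S k) := by
    intro k
    rw [himg k, Lk_image_eq_preimage]
    exact Gk_measurable k (hSmeas k)
  have hTΩ : Tmap '' Ω = ⋃ k, Tmap '' S k := by
    rw [hUnion, Set.image_iUnion]
  rw [hTΩ, measure_iUnion hdisj himgmeas]
  have hSdisj : Pairwise (Function.onFun Disjoint S) := by
    intro k l hkl
    simp only [Function.onFun, Set.disjoint_left]
    rintro v ⟨_, hk⟩ ⟨_, hl⟩
    exact hkl ((Set.mem_singleton_iff.mp hk).symm.trans (Set.mem_singleton_iff.mp hl))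
  conv_rhs => rw [hUnion, measure_iUnion hSdisj hSmeas]
  congr 1
  ext k
  rw [himg k, Measure.addHaar_image_linearMap, Lk_det]
  simp
end

section
/- For any Q ≥ 1, the sum over all fractions γ_i in F_Q of the index ν_2(γ_i) equals 3·N(Q) − 1, where N(Q) is the number of fractions in F_Q. -/
open MeasureTheory

lemma den_coe_div (a b : ℤ) (hb : 0 < b) (h : Int.gcd a b = 1) :
    (((a : ℚ) / (b : ℚ)).den : ℤ) = b := by
  have : ((a / b : ℚ).den : ℤ) = b := Rat.den_div_eq_of_coprime hb h
  simpa using this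

lemma det_one (Q : ℕ) (a b c d : ℤ)
    (hb1 : 1 ≤ b) (hbQ : b ≤ (Q : ℤ)) (hd1 : 1 ≤ d) (hdQ : d ≤ (Q : ℤ))
    (ha : 0 ≤ a) (hc : c ≤ d)
    (hab : Int.gcd a b = 1) (hcd : Int.gcd c d = 1)
    (hlt : a * d < c * b)
    (hgap : ∀ x : ℚ, x ∈ fareySet Q → ¬((a : ℚ) / b < x ∧ x < (c : ℚ) / d)) :
    b * c - a * d = 1 := by
  have hexy : ∃ x y : ℤ, b * x - a * y = 1 ∧ (Q : ℤ) - b < y ∧ y ≤ (Q : ℤ) := by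
    obtain ⟨u, v, huv⟩ := Int.isCoprime_iff_gcd_eq_one.mpr hab
    refine ⟨v + (((Q : ℤ) + u) / b) * a, -u + (((Q : ℤ) + u) / b) * b, ?_, ?_, ?_⟩
    · linear_combination huv
    · have h1 := Int.mul_ediv_add_emod ((Q : ℤ) + u) b
      have h2 := Int.emod_lt_of_pos ((Q : ℤ) + u) (show (0:ℤ) < b by omega)
      have h3 := Int.emod_nonneg ((Q : ℤ) + u) (show b ≠ 0 by omega)
      nlinarith [h1, h2, h3]
    · have h1 := Int.mul_ediv_add_emod ((Q : ℤ) + u) b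
      have h3 := Int.emod_nonneg ((Q : ℤ) + u) (show b ≠ 0 by omega)
      nlinarith [h1, h3]
  obtain ⟨x, y, hxy, hyQb, hyQ⟩ := hexy
  have hy1 : 1 ≤ y := by omega
  have hx1 : 1 ≤ x := by
    by_contra hcon
    push_neg at hcon
    nlinarith [mul_nonneg ha (show (0:ℤ) ≤ y by omega),
      mul_nonpos_of_nonneg_of_nonpos (show (0:ℤ) ≤ b by omega) (show x ≤ 0 by omega)]
  have hxygcd : Int.gcd x y = 1 := by
    rw [← Int.isCoprime_iff_gcd_eq_one]
    exact ⟨b, -a, by linarith [hxy]⟩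
  have h2 : 1 ≤ b * c - a * d := by nlinarith [hlt]
  -- Claim 1 : d * x ≤ c * y
  have claim1 : d * x ≤ c * y := by
    by_contra hcon
    push_neg at hcon
    have h1 : 1 ≤ d * x - c * y := by omega
    have key : d = b * (d * x - c * y) + y * (b * c - a * d) := by
      linear_combination (-d) * hxy
    nlinarith [mul_le_mul_of_nonneg_left h1 (show (0:ℤ) ≤ b by omega),
      mul_le_mul_of_nonneg_left h2 (show (0:ℤ) ≤ y by omega)]
  have hyQ0 : (0:ℚ) < (y:ℚ) := by exact_mod_cast (by omega : (0:ℤ) < y)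
  have hbQ0 : (0:ℚ) < (b:ℚ) := by exact_mod_cast (by omega : (0:ℤ) < b)
  have hdQ0 : (0:ℚ) < (d:ℚ) := by exact_mod_cast (by omega : (0:ℤ) < d)
  have hmem : ((x:ℚ)/(y:ℚ)) ∈ fareySet Q := by
    refine ⟨by positivity, ?_, ?_⟩
    · rw [div_le_one hyQ0]
      have hxley : x ≤ y := by nlinarith [mul_le_mul_of_nonneg_right hc (show (0:ℤ) ≤ y by omega)]
      exact_mod_cast hxley
    · have := den_coe_div x y (by omega) hxygcd
      omega
  have hltxy : (a : ℚ)/b < (x:ℚ)/(y:ℚ) := by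
    rw [div_lt_div_iff₀ hbQ0 hyQ0]
    exact_mod_cast (by nlinarith [hxy] : a * y < x * b)
  have hlexy : (x:ℚ)/(y:ℚ) ≤ (c:ℚ)/d := by
    rw [div_le_div_iff₀ hyQ0 hdQ0]
    exact_mod_cast (by nlinarith [claim1] : x * d ≤ c * y)
  have heq : (x:ℚ)/(y:ℚ) = (c:ℚ)/d := by
    rcases lt_or_eq_of_le hlexy with h | h
    · exact absurd ⟨hltxy, h⟩ (hgap _ hmem)
    · exact h
  have hcross : x * d = c * y := by
    have := (div_eq_div_iff hyQ0.ne' hdQ0.ne').mp heq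
    exact_mod_cast this
  have hdy : d ∣ y := by
    have h1 : d ∣ y * c := ⟨x, by linear_combination -hcross⟩
    exact Int.dvd_of_dvd_mul_left_of_gcd_one h1 (by rwa [Int.gcd_comm] at hcd)
  have hyd : y ∣ d := by
    have h1 : y ∣ x * d := ⟨c, by linear_combination hcross⟩
    exact Int.dvd_of_dvd_mul_right_of_gcd_one h1 (by rwa [Int.gcd_comm] at hxygcd)
  have hdeqy : d = y := Int.dvd_antisymm (by omega) (by omega) hdy hyd
  have hxc : x = c := by
    have : x * d = c * d := by rw [hcross, hdeqy]
    exact mul_right_cancel₀ (by omega) this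
  subst hxc
  subst hdeqy
  exact hxy


lemma Icc_insert_top {a b : ℤ} (h : a ≤ b + 1) :
    Finset.Icc a (b + 1) = insert (b + 1) (Finset.Icc a b) := by
  ext x; simp only [Finset.mem_Icc, Finset.mem_insert]; omega

lemma sum_Icc_top {a b : ℤ} (h : a ≤ b + 1) (f : ℤ → ℤ) :
    (∑ j ∈ Finset.Icc a (b+1), f j) = (∑ j ∈ Finset.Icc a b, f j) + f (b+1) := by
  rw [Icc_insert_top h, Finset.sum_insert (by simp)]; ring

lemma Icc_insert_bot {a b : ℤ} (h : a ≤ b) :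
    Finset.Icc a b = insert a (Finset.Icc (a+1) b) := by
  ext x; simp only [Finset.mem_Icc, Finset.mem_insert]; omega

lemma sum_Icc_bot {a b : ℤ} (h : a ≤ b) (f : ℤ → ℤ) :
    (∑ j ∈ Finset.Icc a b, f j) = f a + (∑ j ∈ Finset.Icc (a+1) b, f j) := by
  rw [Icc_insert_bot h, Finset.sum_insert (by simp)]

lemma sum_shift (a b : ℤ) (f : ℤ → ℤ) :
    (∑ j ∈ Finset.Icc a b, f (j+1)) = ∑ j ∈ Finset.Icc (a+1) (b+1), f j := by
  rw [← Finset.map_add_right_Icc a b 1, Finset.sum_map]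
  rfl

lemma sum_Icc_split {a b c : ℤ} (hab : a ≤ b + 1) (hbc : b ≤ c) (f : ℤ → ℤ) :
    (∑ j ∈ Finset.Icc a c, f j)
      = (∑ j ∈ Finset.Icc a b, f j) + (∑ j ∈ Finset.Icc (b+1) c, f j) := by
  rw [← Finset.sum_union]
  · congr 1
    ext x; simp only [Finset.mem_Icc, Finset.mem_union]; omega
  · rw [Finset.disjoint_left]
    intro x hx hx'
    simp only [Finset.mem_Icc] at hx hx'
    omega

lemma core (n : ℕ) (hn : 1 ≤ n) : ∀ p q : ℤ → ℤ,
    (∀ i : ℤ, 0 ≤ i → i ≤ (n:ℤ) → 1 ≤ q i) →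
    (∀ i : ℤ, 0 ≤ i → i < (n:ℤ) → p (i+1) * q i - p i * q (i+1) = 1) →
    p 0 = 0 → q 0 = 1 → p (n:ℤ) = 1 → q (n:ℤ) = 1 →
    (∑ j ∈ Finset.Icc (1:ℤ) ((n:ℤ)-1), (p (j+1) * q (j-1) - p (j-1) * q (j+1)))
      = 3*((n:ℤ)-1) + 2 - q 1 - q ((n:ℤ)-1) := by
  induction n, hn using Nat.le_induction with
  | base =>
    intro p q hq hd hp0 hq0 hpn hqn
    push_cast at *
    rw [Finset.Icc_eq_empty (by omega), Finset.sum_empty]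
    omega
  | succ n hn1 IH =>
    intro p q hq hd hp0 hq0 hpn hqn
    push_cast at hq hd hpn hqn ⊢
    set nn : ℤ := (n : ℤ) with hnn
    have hnn1 : 1 ≤ nn := by rw [hnn]; exact_mod_cast hn1
    rw [show nn + 1 - 1 = nn by ring]
    -- find index of maximal denominator
    obtain ⟨i, himem, himax⟩ := Finset.exists_max_image (Finset.Icc (0:ℤ) (nn+1)) q
      ⟨0, by simp; omega⟩
    rw [Finset.mem_Icc] at himem
    have himax' : ∀ j : ℤ, 0 ≤ j → j ≤ nn + 1 → q j ≤ q i := fun j h1 h2 =>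
      himax j (Finset.mem_Icc.mpr ⟨h1, h2⟩)
    by_cases hqi2 : q i ≤ 1
    · -- all denominators are 1 : contradiction with n + 1 ≥ 2
      exfalso
      have hall : ∀ j : ℤ, 0 ≤ j → j ≤ nn + 1 → q j = 1 := by
        intro j h1 h2
        have := hq j h1 h2
        have := himax' j h1 h2
        have := himax' 0 le_rfl (by omega)
        omega
      have hpk : ∀ k : ℕ, (k:ℤ) ≤ nn + 1 → p k = k := by
        intro k
        induction k with
        | zero => intro _; exact_mod_cast hp0
        | succ k ihk =>
          intro hk
          push_cast at hk ⊢
          have h1 := hd k (by positivity) (by omega)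
          have h2 := hall k (by positivity) (by omega)
          have h3 := hall ((k:ℤ)+1) (by positivity) (by omega)
          have h4 := ihk (by omega)
          rw [h2, h3] at h1
          push_cast at h4
          omega
      have := hpk (n+1) (by push_cast; omega)
      push_cast at this
      rw [hpn] at this
      omega
    · push_neg at hqi2
      have hi1 : 1 ≤ i := by
        rcases eq_or_lt_of_le himem.1 with h | h
        · rw [← h] at hqi2; omega
        · omega
      have hin : i ≤ nn := by
        rcases eq_or_lt_of_le himem.2 with h | h
        · rw [h] at hqi2; omega
        · omega
      -- determinant identities around i
      have hdm : p i * q (i-1) - p (i-1) * q i = 1 := by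
        have h := hd (i-1) (by omega) (by omega)
        rwa [show i - 1 + 1 = i by ring] at h
      have hdi : p (i+1) * q i - p i * q (i+1) = 1 := hd i (by omega) (by omega)
      have hnu : q i * (p (i+1) * q (i-1) - p (i-1) * q (i+1)) = q (i-1) + q (i+1) := by
        linear_combination q (i-1) * hdi + q (i+1) * hdm
      have hqm1 : 1 ≤ q (i-1) := hq (i-1) (by omega) (by omega)
      have hqp1 : 1 ≤ q (i+1) := hq (i+1) (by omega) (by omega)
      have hqmle : q (i-1) ≤ q i := himax' (i-1) (by omega) (by omega)
      have hqple : q (i+1) ≤ q i := himax' (i+1) (by omega) (by omega)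
      -- the index nu_i equals 1
      have hν1 : p (i+1) * q (i-1) - p (i-1) * q (i+1) = 1 := by
        have hpos : 1 ≤ p (i+1) * q (i-1) - p (i-1) * q (i+1) := by nlinarith
        have hlt2 : ¬ 2 ≤ p (i+1) * q (i-1) - p (i-1) * q (i+1) := by
          intro h2ν
          have e1 : q (i-1) = q i := by nlinarith
          have e2 : q (i+1) = q i := by nlinarith
          have hfac : q i * (p (i+1) - p i) = 1 := by
            rw [e2] at hdi; linear_combination hdi
          have : q i ≤ 1 := Int.le_of_dvd one_pos ⟨p (i+1) - p i, hfac.symm⟩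
          omega
        omega
      -- mediant relations at i
      have hqrel : q (i+1) = q i - q (i-1) := by
        linear_combination (-1 : ℤ) * hnu + q i * hν1
      have hprel : p (i+1) = p i - p (i-1) := by
        have hh : q i * (p (i+1) + p (i-1) - p i) = 0 := by
          linear_combination hdi - hdm + p i * hqrel
        have := (mul_eq_zero.mp hh).resolve_left (by omega)
        linarith
      -- the removed sequence
      set p' : ℤ → ℤ := fun j => if j < i then p j else p (j+1) with hp'def
      set q' : ℤ → ℤ := fun j => if j < i then q j else q (j+1) with hq'def
      have hp'lt : ∀ j : ℤ, j < i → p' j = p j := by intro j h; simp [hp'def, h]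
      have hp'ge : ∀ j : ℤ, i ≤ j → p' j = p (j+1) := by
        intro j h; simp [hp'def, show ¬ j < i by omega]
      have hq'lt : ∀ j : ℤ, j < i → q' j = q j := by intro j h; simp [hq'def, h]
      have hq'ge : ∀ j : ℤ, i ≤ j → q' j = q (j+1) := by
        intro j h; simp [hq'def, show ¬ j < i by omega]
      -- hypotheses of IH for p', q'
      have hq' : ∀ j : ℤ, 0 ≤ j → j ≤ nn → 1 ≤ q' j := by
        intro j h1 h2
        by_cases hj : j < i
        · rw [hq'lt j hj]; exact hq j h1 (by omega)
        · rw [hq'ge j (by omega)]; exact hq (j+1) (by omega) (by omega)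
      have hd' : ∀ j : ℤ, 0 ≤ j → j < nn → p' (j+1) * q' j - p' j * q' (j+1) = 1 := by
        intro j h1 h2
        rcases lt_trichotomy (j+1) i with hj | hj | hj
        · rw [hp'lt (j+1) hj, hp'lt j (by omega), hq'lt (j+1) hj, hq'lt j (by omega)]
          exact hd j h1 (by omega)
        · have hji : j = i - 1 := by omega
          rw [hp'ge (j+1) (by omega), hp'lt j (by omega), hq'ge (j+1) (by omega),
            hq'lt j (by omega), hji]
          rw [show i - 1 + 1 = i by ring]
          exact hν1
        · rw [hp'ge (j+1) (by omega), hp'ge j (by omega), hq'ge (j+1) (by omega),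
            hq'ge j (by omega)]
          exact hd (j+1) (by omega) (by omega)
      have hp'0 : p' 0 = 0 := by rw [hp'lt 0 (by omega)]; exact hp0
      have hq'0 : q' 0 = 1 := by rw [hq'lt 0 (by omega)]; exact hq0
      have hp'n : p' nn = 1 := by
        rw [hp'ge nn (by omega)]; exact hpn
      have hq'n : q' nn = 1 := by
        rw [hq'ge nn (by omega)]; exact hqn
      have hIH := IH p' q' hq' hd' hp'0 hq'0 hp'n hq'n
      -- notation for the index functions
      set f : ℤ → ℤ := fun j => p (j+1) * q (j-1) - p (j-1) * q (j+1) with hfdef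
      set f' : ℤ → ℤ := fun j => p' (j+1) * q' (j-1) - p' (j-1) * q' (j+1) with hf'def
      have hfeval : ∀ j : ℤ, f j = p (j+1) * q (j-1) - p (j-1) * q (j+1) := fun j => rfl
      have hf'eval : ∀ j : ℤ, f' j = p' (j+1) * q' (j-1) - p' (j-1) * q' (j+1) := fun j => rfl
      -- f' agrees with f below i - 1
      have hflow : ∀ j : ℤ, 1 ≤ j → j ≤ i - 2 → f' j = f j := by
        intro j h1 h2
        rw [hf'eval, hfeval, hp'lt (j+1) (by omega), hp'lt (j-1) (by omega),
          hq'lt (j+1) (by omega), hq'lt (j-1) (by omega)]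
      -- f' at i - 1 (when 2 ≤ i)
      have hfmid : 2 ≤ i → f' (i-1) = f (i-1) - 1 := by
        intro h2i
        have hdm2 : p (i-1) * q (i-2) - p (i-2) * q (i-1) = 1 := by
          have h := hd (i-2) (by omega) (by omega)
          rwa [show i - 2 + 1 = i - 1 by ring] at h
        rw [hf'eval, hfeval]
        rw [show i - 1 + 1 = i by ring, show i - 1 - 1 = i - 2 by ring]
        rw [hp'ge i (by omega), hp'lt (i-2) (by omega), hq'ge i (by omega),
          hq'lt (i-2) (by omega)]
        linear_combination q (i-2) * hprel - p (i-2) * hqrel - hdm2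
      -- f' at i (when i ≤ nn - 1)
      have hfmid2 : i ≤ nn - 1 → f' i = f (i+1) - 1 := by
        intro hile
        have hdi1 : p (i+2) * q (i+1) - p (i+1) * q (i+2) = 1 := by
          have h := hd (i+1) (by omega) (by omega)
          rwa [show i + 1 + 1 = i + 2 by ring] at h
        rw [hf'eval, hfeval]
        rw [hp'ge (i+1) (by omega), hp'lt (i-1) (by omega), hq'ge (i+1) (by omega),
          hq'lt (i-1) (by omega)]
        rw [show i + 1 + 1 = i + 2 by ring]
        rw [show i + 1 - 1 = i by ring]
        linear_combination p (i+2) * hqrel - q (i+2) * hprel - hdi1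
      -- f' agrees with shifted f above i
      have hfhigh : ∀ j : ℤ, i + 1 ≤ j → f' j = f (j+1) := by
        intro j hj
        rw [hf'eval, hfeval, hp'ge (j+1) (by omega), hp'ge (j-1) (by omega),
          hq'ge (j+1) (by omega), hq'ge (j-1) (by omega)]
        rw [show j - 1 + 1 = j + 1 - 1 by ring]
      -- split sums and conclude
      by_cases hI1 : i = 1
      · by_cases hIN : i = nn
        · -- nn = 1, single term
          have e : nn = 1 := by omega
          rw [e, Finset.Icc_self, Finset.sum_singleton]
          rw [hI1] at hν1 hqrel
          rw [e] at hqn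
          have hfi : f 1 = 1 := by rw [hfeval]; exact hν1
          have b1 : q (1 - 1) = q 0 := by norm_num
          omega
        · -- i = 1 < nn
          have hnn2 : 2 ≤ nn := by omega
          have hshift : ∑ j ∈ Finset.Icc (2:ℤ) (nn-1), f' j
              = ∑ j ∈ Finset.Icc (3:ℤ) nn, f j := by
            have h1 : ∑ j ∈ Finset.Icc (2:ℤ) (nn-1), f' j
                = ∑ j ∈ Finset.Icc (2:ℤ) (nn-1), f (j+1) :=
              Finset.sum_congr rfl (fun j hj => by
                rw [Finset.mem_Icc] at hj; exact hfhigh j (by omega))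
            rw [h1, sum_shift, show (2:ℤ) + 1 = 3 by norm_num,
              show nn - 1 + 1 = nn by ring]
          have hS : (∑ j ∈ Finset.Icc (1:ℤ) nn, f j)
              = f 1 + (f 2 + (∑ j ∈ Finset.Icc (3:ℤ) nn, f j)) := by
            rw [sum_Icc_bot (show (1:ℤ) ≤ nn by omega) f,
              show (1:ℤ) + 1 = 2 by norm_num,
              sum_Icc_bot (show (2:ℤ) ≤ nn by omega) f,
              show (2:ℤ) + 1 = 3 by norm_num]
          have hS' : (∑ j ∈ Finset.Icc (1:ℤ) (nn-1), f' j)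
              = (f 2 - 1) + (∑ j ∈ Finset.Icc (3:ℤ) nn, f j) := by
            rw [sum_Icc_bot (show (1:ℤ) ≤ nn - 1 by omega) f',
              show (1:ℤ) + 1 = 2 by norm_num, hshift]
            have h2 : f' 1 = f 2 - 1 := by
              have h3 := hfmid2 (by omega)
              rw [hI1] at h3
              rwa [show (1:ℤ) + 1 = 2 by norm_num] at h3
            rw [h2]
          have hfi : f 1 = 1 := by
            rw [hfeval]; rw [hI1] at hν1; exact hν1
          have hq'1 : q' 1 = q 2 := by
            rw [hq'ge 1 (by omega), show (1:ℤ) + 1 = 2 by norm_num]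
          have hq'n1 : q' (nn - 1) = q nn := by
            rw [hq'ge (nn-1) (by omega), show nn - 1 + 1 = nn by ring]
          have hqr : q 2 = q 1 - q 0 := by
            rw [hI1] at hqrel
            rwa [show (1:ℤ) + 1 = 2 by norm_num, show (1:ℤ) - 1 = 0 by norm_num] at hqrel
          rw [hq'1, hq'n1] at hIH
          have hb1 : (Finset.Icc (1:ℤ) nn).sum f = ∑ j ∈ Finset.Icc (1:ℤ) nn, f j := rfl
          have hb2 : (Finset.Icc (1:ℤ) (nn-1)).sum f'
              = ∑ j ∈ Finset.Icc (1:ℤ) (nn-1), f' j := rfl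
          omega
      · have hi2 : 2 ≤ i := by omega
        have hA' : (∑ j ∈ Finset.Icc (1:ℤ) (i-1), f' j)
            = (∑ j ∈ Finset.Icc (1:ℤ) (i-1), f j) - 1 := by
          rw [show i - 1 = (i - 2) + 1 by ring, sum_Icc_top (by omega) f',
            sum_Icc_top (by omega) f]
          have h1 : ∑ j ∈ Finset.Icc (1:ℤ) (i-2), f' j
              = ∑ j ∈ Finset.Icc (1:ℤ) (i-2), f j :=
            Finset.sum_congr rfl (fun j hj => by
              rw [Finset.mem_Icc] at hj; exact hflow j (by omega) (by omega))
          rw [h1]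
          have h2 := hfmid hi2
          rw [show i - 2 + 1 = i - 1 by ring, h2]
          ring
        by_cases hIN : i = nn
        · -- 1 < i = nn
          have hS : (∑ j ∈ Finset.Icc (1:ℤ) nn, f j)
              = (∑ j ∈ Finset.Icc (1:ℤ) (i-1), f j) + f i := by
            rw [← hIN, show i = (i - 1) + 1 by ring, sum_Icc_top (by omega) f,
              show i - 1 + 1 = i by ring]
          have hfi : f i = 1 := by rw [hfeval]; exact hν1
          have hS' : (∑ j ∈ Finset.Icc (1:ℤ) (nn-1), f' j)
              = (∑ j ∈ Finset.Icc (1:ℤ) (i-1), f j) - 1 := by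
            rw [← hIN, hA']
          have hq'1 : q' 1 = q 1 := hq'lt 1 (by omega)
          have hq'n1 : q' (nn - 1) = q (nn-1) := by
            rw [hq'lt (nn-1) (by omega)]
          have hqr : q (nn+1) = q nn - q (nn-1) := by rw [hIN] at hqrel; exact hqrel
          rw [hq'1, hq'n1] at hIH
          have hb1 : (Finset.Icc (1:ℤ) nn).sum f = ∑ j ∈ Finset.Icc (1:ℤ) nn, f j := rfl
          have hb2 : (Finset.Icc (1:ℤ) (nn-1)).sum f'
              = ∑ j ∈ Finset.Icc (1:ℤ) (nn-1), f' j := rfl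
          omega
        · -- 1 < i < nn
          have hilt : i ≤ nn - 1 := by omega
          have hshift : ∑ j ∈ Finset.Icc (i+1) (nn-1), f' j
              = ∑ j ∈ Finset.Icc (i+2) nn, f j := by
            have h1 : ∑ j ∈ Finset.Icc (i+1) (nn-1), f' j
                = ∑ j ∈ Finset.Icc (i+1) (nn-1), f (j+1) :=
              Finset.sum_congr rfl (fun j hj => by
                rw [Finset.mem_Icc] at hj; exact hfhigh j (by omega))
            rw [h1, sum_shift, show i + 1 + 1 = i + 2 by ring,
              show nn - 1 + 1 = nn by ring]
          have hfi : f i = 1 := by rw [hfeval]; exact hν1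
          have hS : (∑ j ∈ Finset.Icc (1:ℤ) nn, f j)
              = (∑ j ∈ Finset.Icc (1:ℤ) (i-1), f j) + f i
                + (f (i+1) + (∑ j ∈ Finset.Icc (i+2) nn, f j)) := by
            rw [sum_Icc_split (show (1:ℤ) ≤ (i-1)+1 by omega) (show i - 1 ≤ nn by omega) f,
              show i - 1 + 1 = i by ring, sum_Icc_bot (show i ≤ nn by omega) f,
              sum_Icc_bot (show i + 1 ≤ nn by omega) f,
              show i + 1 + 1 = i + 2 by ring]
            ring
          have hS' : (∑ j ∈ Finset.Icc (1:ℤ) (nn-1), f' j)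
              = ((∑ j ∈ Finset.Icc (1:ℤ) (i-1), f j) - 1)
                + ((f (i+1) - 1) + (∑ j ∈ Finset.Icc (i+2) nn, f j)) := by
            rw [sum_Icc_split (show (1:ℤ) ≤ (i-1)+1 by omega) (show i - 1 ≤ nn - 1 by omega) f',
              show i - 1 + 1 = i by ring, hA',
              sum_Icc_bot (show i ≤ nn - 1 by omega) f', hshift, hfmid2 hilt]
          have hq'1 : q' 1 = q 1 := hq'lt 1 (by omega)
          have hq'n1 : q' (nn - 1) = q nn := by
            rw [hq'ge (nn-1) (by omega), show nn - 1 + 1 = nn by ring]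
          rw [hq'1, hq'n1] at hIH
          have hb1 : (Finset.Icc (1:ℤ) nn).sum f = ∑ j ∈ Finset.Icc (1:ℤ) nn, f j := rfl
          have hb2 : (Finset.Icc (1:ℤ) (nn-1)).sum f'
              = ∑ j ∈ Finset.Icc (1:ℤ) (nn-1), f' j := rfl
          omega

/-- Hall–Shiu: the sum of the index over `F_Q` is `3 N(Q) − 1`. -/
theorem sum_nu2 (Q N : ℕ) (p q : ℤ → ℤ) (hQ : 1 ≤ Q) (hF : IsFarey Q N p q) :
    (∑ i ∈ Finset.Icc (1 : ℤ) (N : ℤ), nuk p q 2 i) = 3 * (N : ℤ) - 1 := by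
  have h1mem : (1 : ℚ) ∈ fareySet Q := by
    refine ⟨one_pos, le_refl _, ?_⟩
    simpa using hQ
  obtain ⟨i0, hi01, hi0N, hi0eq⟩ := hF.surj 1 h1mem
  have hN1 : 1 ≤ N := by
    by_contra h
    push_neg at h
    interval_cases N
    omega
  have hi0 : i0 = (N : ℤ) := by
    by_contra h
    have hlt := hF.mono i0 N (by omega)
    rw [hi0eq] at hlt
    have hmemN := (hF.mem N (by omega) (le_refl _)).2.1
    linarith
  have hγN : (p (N:ℤ) : ℚ) / (q (N:ℤ)) = 1 := by rw [← hi0]; exact hi0eq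
  have hqN0 : (0:ℤ) < q (N:ℤ) := hF.qpos _
  have hpqN : p (N:ℤ) = q (N:ℤ) := by
    have hne : ((q (N:ℤ) : ℚ)) ≠ 0 := by
      exact_mod_cast hqN0.ne'
    rw [div_eq_one_iff_eq hne] at hγN
    exact_mod_cast hγN
  have hqN1 : q (N:ℤ) = 1 := by
    have h := hF.coprime (N:ℤ)
    rw [hpqN, Int.gcd_self] at h
    omega
  have hpN1 : p (N:ℤ) = 1 := by omega
  have hq0 : q 0 = 1 := by
    have h := hF.period_q 0
    rw [zero_add] at h
    omega
  have hp0 : p 0 = 0 := by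
    have h := hF.period_p 0
    rw [zero_add] at h
    omega
  have hden : ∀ i : ℤ, 1 ≤ i → i ≤ (N:ℤ) → q i ≤ (Q:ℤ) := by
    intro i h1 h2
    have hm := (hF.mem i h1 h2).2.2
    have hd := den_coe_div (p i) (q i) (hF.qpos i) (hF.coprime i)
    omega
  have hpos : ∀ i : ℤ, 1 ≤ i → i ≤ (N:ℤ) → 1 ≤ p i := by
    intro i h1 h2
    have hm := (hF.mem i h1 h2).1
    have hqi := hF.qpos i
    rcases div_pos_iff.mp hm with ⟨ha, _⟩ | ⟨_, hb⟩
    · have : (0:ℤ) < p i := by exact_mod_cast ha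
      omega
    · exfalso
      have : (0:ℚ) < (q i : ℚ) := by exact_mod_cast hqi
      linarith
  have hle1 : ∀ i : ℤ, 1 ≤ i → i ≤ (N:ℤ) → p i ≤ q i := by
    intro i h1 h2
    have hm := (hF.mem i h1 h2).2.1
    have hqi : (0:ℚ) < (q i : ℚ) := by exact_mod_cast hF.qpos i
    rw [div_le_one hqi] at hm
    exact_mod_cast hm
  have hdet : ∀ i : ℤ, 0 ≤ i → i < (N:ℤ) → p (i+1) * q i - p i * q (i+1) = 1 := by
    intro i h0 hiN
    have hqi := hF.qpos i
    have hqi1 := hF.qpos (i+1)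
    have hbQ : q i ≤ (Q:ℤ) := by
      rcases eq_or_lt_of_le h0 with h | h
      · rw [← h, hq0]; exact_mod_cast hQ
      · exact hden i (by omega) (by omega)
    have hdQ : q (i+1) ≤ (Q:ℤ) := hden (i+1) (by omega) (by omega)
    have ha : 0 ≤ p i := by
      rcases eq_or_lt_of_le h0 with h | h
      · rw [← h, hp0]
      · linarith [hpos i (by omega) (by omega)]
    have hc : p (i+1) ≤ q (i+1) := hle1 (i+1) (by omega) (by omega)
    have hlt : p i * q (i+1) < p (i+1) * q i := by
      have hm := hF.mono i (i+1) (by omega)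
      rw [div_lt_div_iff₀ (by exact_mod_cast hqi) (by exact_mod_cast hqi1)] at hm
      exact_mod_cast hm
    have hgap : ∀ x : ℚ, x ∈ fareySet Q →
        ¬((p i : ℚ) / (q i) < x ∧ x < (p (i+1) : ℚ) / (q (i+1))) := by
      rintro x hx ⟨hx1, hx2⟩
      obtain ⟨j, hj1, hjN, hjeq⟩ := hF.surj x hx
      rcases lt_trichotomy j i with h | h | h
      · have hm := hF.mono j i h
        rw [hjeq] at hm
        linarith
      · rw [← h, hjeq] at hx1
        linarith
      · rcases eq_or_lt_of_le (show i + 1 ≤ j by omega) with h2 | h2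
        · rw [← h2] at hjeq
          rw [hjeq] at hx2
          linarith
        · have hm := hF.mono (i+1) j h2
          rw [hjeq] at hm
          linarith
    have hres := det_one Q (p i) (q i) (p (i+1)) (q (i+1)) (by omega) hbQ (by omega) hdQ
      ha hc (hF.coprime i) (hF.coprime (i+1)) hlt hgap
    linarith
  have hcore := core N hN1 p q (fun i _ _ => by linarith [hF.qpos i]) hdet hp0 hq0 hpN1 hqN1
  have hnuk : ∀ i : ℤ, nuk p q 2 i = p (i+1) * q (i-1) - p (i-1) * q (i+1) := by
    intro i
    unfold nuk
    rw [show i + ((2:ℕ):ℤ) - 1 = i + 1 by push_cast; ring]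
  have hsplit := sum_Icc_top (a := 1) (b := (N:ℤ) - 1) (by omega)
    (fun j => p (j+1) * q (j-1) - p (j-1) * q (j+1))
  rw [show (N:ℤ) - 1 + 1 = (N:ℤ) by ring] at hsplit
  have hpN1' : p ((N:ℤ)+1) = p 1 + q 1 := by
    have h := hF.period_p 1
    rwa [add_comm 1 (N:ℤ)] at h
  have hqN1' : q ((N:ℤ)+1) = q 1 := by
    have h := hF.period_q 1
    rwa [add_comm 1 (N:ℤ)] at h
  have hp1 : p 1 = 1 := by
    have h := hdet 0 le_rfl (by omega)
    rw [hp0, hq0] at h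
    rw [zero_add] at h
    linarith
  have hpNm1 : p ((N:ℤ)-1) = q ((N:ℤ)-1) - 1 := by
    have h := hdet ((N:ℤ)-1) (by omega) (by omega)
    rw [show (N:ℤ)-1+1 = (N:ℤ) by ring, hpN1, hqN1] at h
    linarith
  calc (∑ i ∈ Finset.Icc (1 : ℤ) (N : ℤ), nuk p q 2 i)
      = ∑ i ∈ Finset.Icc (1 : ℤ) (N : ℤ), (p (i+1) * q (i-1) - p (i-1) * q (i+1)) :=
        Finset.sum_congr rfl (fun i _ => hnuk i)
    _ = (∑ i ∈ Finset.Icc (1 : ℤ) ((N:ℤ)-1), (p (i+1) * q (i-1) - p (i-1) * q (i+1)))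
        + (p ((N:ℤ)+1) * q ((N:ℤ)-1) - p ((N:ℤ)-1) * q ((N:ℤ)+1)) := hsplit
    _ = 3*((N:ℤ)-1) + 2 - q 1 - q ((N:ℤ)-1)
        + (p ((N:ℤ)+1) * q ((N:ℤ)-1) - p ((N:ℤ)-1) * q ((N:ℤ)+1)) := by rw [hcore]
    _ = 3 * (N : ℤ) - 1 := by
        rw [hpN1', hqN1', hpNm1, hp1]
        ring
end
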